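/- arXiv:1505.04093 — 3 statements merged into one kernel-verified Lean document; each statement's English description precedes it below -/
import Mathlib

section
/- For each i ∈ {1,…,2m}, j ∈ {1,…,n} and every (u,v) ∈ g↑ ∩ LB_ij, the set S = {(u',v') ∈ g↑ ∩ TR_ij : u' ≥ u and v' ≥ v} is nonempty and has a ≼-greatest element (u*,v*), and r↑(u,v) = r↑(u*,v*). -/
open Set

noncomputable section

/-- The piecewise linear closed curve through the vertices `x 0, x 1, …`:
`f(i+α) = (1-α) • x i + α • x (i+1)`. -/
def fCurve {k : ℕ} (x : ℕ → EuclideanSpace ℝ (Fin k)) (t : ℝ) :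
    EuclideanSpace ℝ (Fin k) :=
  (1 - Int.fract t) • x (⌊t⌋.toNat) + Int.fract t • x (⌊t⌋.toNat + 1)

/-- The extension of the curve from `[0,m]` to `[0,2m]` by `f(u) = f(u-m)` for `u > m`. -/
def fCurveExt {k : ℕ} (m : ℕ) (x : ℕ → EuclideanSpace ℝ (Fin k)) (u : ℝ) :
    EuclideanSpace ℝ (Fin k) :=
  if u ≤ m then fCurve x u else fCurve x (u - m)

/-- The rectangle `D = [0,2m] × [0,n]`. -/
def Dfull (m n : ℕ) : Set (ℝ × ℝ) :=
  Icc (0:ℝ) (2*(m:ℝ)) ×ˢ Icc (0:ℝ) (n:ℝ)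

/-- The free space `D_ε = {(u,v) ∈ D : dist (f_X u) (f_Y v) ≤ ε}`. -/
def Dfree {k : ℕ} (m n : ℕ) (x y : ℕ → EuclideanSpace ℝ (Fin k)) (ε : ℝ) :
    Set (ℝ × ℝ) :=
  {p ∈ Dfull m n | dist (fCurveExt m x p.1) (fCurve y p.2) ≤ ε}

/-- The top side `T = [0,2m] × {n}` of `D`. -/
def Tside (m n : ℕ) : Set (ℝ × ℝ) := Icc (0:ℝ) (2*(m:ℝ)) ×ˢ {(n:ℝ)}

/-- The bottom side `B = [0,2m] × {0}` of `D`. -/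
def Bside (m : ℕ) : Set (ℝ × ℝ) := Icc (0:ℝ) (2*(m:ℝ)) ×ˢ {(0:ℝ)}

/-- A monotone (non-decreasing) path: a connected subset `γ ⊆ Dε` with
`(u-u')·(v-v') ≥ 0` for all `(u,v), (u',v') ∈ γ`. -/
def IsMonPath (Dε γ : Set (ℝ × ℝ)) : Prop :=
  γ ⊆ Dε ∧ IsConnected γ ∧
    ∀ p ∈ γ, ∀ q ∈ γ, (p.1 - q.1) * (p.2 - q.2) ≥ 0

/-- Two points are mutually reachable if some monotone path contains both. -/
def Reach (Dε : Set (ℝ × ℝ)) (p q : ℝ × ℝ) : Prop :=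
  ∃ γ : Set (ℝ × ℝ), IsMonPath Dε γ ∧ p ∈ γ ∧ q ∈ γ

/-- `g↓`: the points of `Dε` mutually reachable with at least one point of `B`. -/
def gDown (m : ℕ) (Dε : Set (ℝ × ℝ)) : Set (ℝ × ℝ) :=
  {p ∈ Dε | ∃ q ∈ Bside m, Reach Dε p q}

/-- `g↑`: the points of `Dε` mutually reachable with at least one point of `T`. -/
def gUp (m n : ℕ) (Dε : Set (ℝ × ℝ)) : Set (ℝ × ℝ) :=
  {p ∈ Dε | ∃ q ∈ Tside m n, Reach Dε p q}

/-- The pointer `r↑(p)`: the maximum `u* ∈ [0,2m]` such that `p` and `(u*, n)`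
are mutually reachable. -/
def rUp (m n : ℕ) (Dε : Set (ℝ × ℝ)) (p : ℝ × ℝ) : ℝ :=
  sSup {u : ℝ | u ∈ Icc (0:ℝ) (2*(m:ℝ)) ∧ Reach Dε p (u, (n:ℝ))}

/-- The pointer `r↓(p)`: for `p` with `p.2 > 0`, the maximum `u* ∈ [0,2m]` such
that `p` and `(u*, 0)` are mutually reachable; on the bottom side `r↓(u,0) = u`. -/
def rDown (m : ℕ) (Dε : Set (ℝ × ℝ)) (p : ℝ × ℝ) : ℝ :=
  if p.2 = 0 then p.1
  else sSup {u : ℝ | u ∈ Icc (0:ℝ) (2*(m:ℝ)) ∧ Reach Dε p (u, (0:ℝ))}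

/-- The cell `D_ij = [i-1,i] × [j-1,j]`. -/
def cellD (i j : ℕ) : Set (ℝ × ℝ) :=
  Icc ((i:ℝ)-1) (i:ℝ) ×ˢ Icc ((j:ℝ)-1) (j:ℝ)

/-- The top side `T_ij` of the cell `D_ij`. -/
def cellT (i j : ℕ) : Set (ℝ × ℝ) := Icc ((i:ℝ)-1) (i:ℝ) ×ˢ {(j:ℝ)}

/-- The bottom side `B_ij` of the cell `D_ij`. -/
def cellB (i j : ℕ) : Set (ℝ × ℝ) := Icc ((i:ℝ)-1) (i:ℝ) ×ˢ {((j:ℝ)-1)}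

/-- The right side `R_ij` of the cell `D_ij`. -/
def cellR (i j : ℕ) : Set (ℝ × ℝ) := {(i:ℝ)} ×ˢ Icc ((j:ℝ)-1) (j:ℝ)

/-- The left side `L_ij` of the cell `D_ij`. -/
def cellL (i j : ℕ) : Set (ℝ × ℝ) := {((i:ℝ)-1)} ×ˢ Icc ((j:ℝ)-1) (j:ℝ)

/-- The partial order `≼` on `D`: `(u1,v1) ≼ (u2,v2)` iff `u1 ≤ u2` and `v1 ≥ v2`. -/
def prec (p q : ℝ × ℝ) : Prop := p.1 ≤ q.1 ∧ q.2 ≤ p.2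

namespace Stmt12aux

/-- coordinate sum -/
def sm (p : ℝ × ℝ) : ℝ := p.1 + p.2

lemma continuous_sm : Continuous sm := continuous_fst.add continuous_snd

/-- A monotone 1-Lipschitz curve (in each coordinate). -/
def MonCurve (φ : ℝ → ℝ × ℝ) : Prop :=
  ∀ σ τ : ℝ, σ ≤ τ →
    (φ σ).1 ≤ (φ τ).1 ∧ (φ σ).2 ≤ (φ τ).2 ∧
    (φ τ).1 - (φ σ).1 ≤ τ - σ ∧ (φ τ).2 - (φ σ).2 ≤ τ - σ

lemma MonCurve.dist_le {φ : ℝ → ℝ × ℝ} (h : MonCurve φ) (σ τ : ℝ) :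
    dist (φ σ) (φ τ) ≤ dist σ τ := by
  rcases le_total σ τ with hle | hle
  · obtain ⟨h1, h2, h3, h4⟩ := h σ τ hle
    rw [Prod.dist_eq, Real.dist_eq, Real.dist_eq, Real.dist_eq]
    rw [abs_of_nonpos (by linarith), abs_of_nonpos (by linarith),
      abs_of_nonpos (by linarith)]
    simp only [max_le_iff]
    constructor <;> linarith
  · obtain ⟨h1, h2, h3, h4⟩ := h τ σ hle
    rw [Prod.dist_eq, Real.dist_eq, Real.dist_eq, Real.dist_eq]
    rw [abs_of_nonneg (by linarith), abs_of_nonneg (by linarith),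
      abs_of_nonneg (by linarith)]
    simp only [max_le_iff]
    constructor <;> linarith

lemma MonCurve.continuous {φ : ℝ → ℝ × ℝ} (h : MonCurve φ) : Continuous φ :=
  (LipschitzWith.of_dist_le_mul (K := 1) (fun σ τ => by
    rw [NNReal.coe_one, one_mul]; exact h.dist_le σ τ)).continuous

/-- Reachability witnessed by an explicit monotone curve parametrized by
coordinate sum. -/
def CReach (Dε : Set (ℝ × ℝ)) (a b : ℝ × ℝ) : Prop :=
  sm a ≤ sm b ∧ ∃ φ : ℝ → ℝ × ℝ, MonCurve φ ∧ φ (sm a) = a ∧ φ (sm b) = b ∧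
    ∀ σ ∈ Icc (sm a) (sm b), φ σ ∈ Dε ∧ sm (φ σ) = σ

lemma monPath_le {Dε γ : Set (ℝ × ℝ)} (h : IsMonPath Dε γ) {a b : ℝ × ℝ}
    (ha : a ∈ γ) (hb : b ∈ γ) (hs : sm a ≤ sm b) : a.1 ≤ b.1 ∧ a.2 ≤ b.2 := by
  have := h.2.2 a ha b hb
  have hs' : a.1 + a.2 ≤ b.1 + b.2 := hs
  constructor <;> nlinarith [sq_nonneg (a.1 - b.1), sq_nonneg (a.2 - b.2)]

lemma monPath_inj {Dε γ : Set (ℝ × ℝ)} (h : IsMonPath Dε γ) {a b : ℝ × ℝ}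
    (ha : a ∈ γ) (hb : b ∈ γ) (hs : sm a = sm b) : a = b := by
  have h1 := monPath_le h ha hb hs.le
  have h2 := monPath_le h hb ha hs.ge
  exact Prod.ext (le_antisymm h1.1 h2.1) (le_antisymm h1.2 h2.2)

lemma Reach.creach {Dε : Set (ℝ × ℝ)} {a b : ℝ × ℝ} (h : Reach Dε a b)
    (hs : sm a ≤ sm b) : CReach Dε a b := by
  classical
  obtain ⟨γ, hγ, ha, hb⟩ := h
  set ψ : ℝ → ℝ × ℝ := fun σ => if hh : ∃ c ∈ γ, sm c = σ then hh.choose else a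
    with hψdef
  have hmem : ∀ σ ∈ Icc (sm a) (sm b), ψ σ ∈ γ ∧ sm (ψ σ) = σ := by
    intro σ hσ
    have hex : ∃ c ∈ γ, sm c = σ := by
      have himg := hγ.2.1.isPreconnected.intermediate_value ha hb
        continuous_sm.continuousOn hσ
      obtain ⟨c, hc, hcσ⟩ := himg
      exact ⟨c, hc, hcσ⟩
    simp only [hψdef, dif_pos hex]
    exact ⟨hex.choose_spec.1, hex.choose_spec.2⟩
  set cl : ℝ → ℝ := fun σ => max (sm a) (min (sm b) σ) with hcl
  have hclmem : ∀ σ, cl σ ∈ Icc (sm a) (sm b) := by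
    intro σ
    constructor
    · exact le_max_left _ _
    · exact max_le hs (min_le_left _ _)
  have hclid : ∀ σ ∈ Icc (sm a) (sm b), cl σ = σ := by
    intro σ hσ
    simp only [hcl]
    rw [min_eq_right hσ.2, max_eq_right hσ.1]
  have hclmono : ∀ σ τ : ℝ, σ ≤ τ → cl σ ≤ cl τ ∧ cl τ - cl σ ≤ τ - σ := by
    intro σ τ hστ
    simp only [hcl, max_def, min_def]
    split_ifs <;> constructor <;> linarith
  refine ⟨hs, fun σ => ψ (cl σ), ?_, ?_, ?_, ?_⟩
  · intro σ τ hστ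
    obtain ⟨hc1, hc2⟩ := hclmono σ τ hστ
    obtain ⟨hmσ, hsσ⟩ := hmem _ (hclmem σ)
    obtain ⟨hmτ, hsτ⟩ := hmem _ (hclmem τ)
    have hle := monPath_le hγ hmσ hmτ (by rw [hsσ, hsτ]; exact hc1)
    have e1 : sm (ψ (cl σ)) = cl σ := hsσ
    have e2 : sm (ψ (cl τ)) = cl τ := hsτ
    unfold sm at e1 e2
    refine ⟨hle.1, hle.2, by linarith [hle.2], by linarith [hle.1]⟩
  · show ψ (cl (sm a)) = a
    rw [hclid _ ⟨le_refl _, hs⟩]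
    exact monPath_inj hγ (hmem (sm a) ⟨le_refl _, hs⟩).1 ha
      (hmem (sm a) ⟨le_refl _, hs⟩).2
  · show ψ (cl (sm b)) = b
    rw [hclid _ ⟨hs, le_refl _⟩]
    exact monPath_inj hγ (hmem (sm b) ⟨hs, le_refl _⟩).1 hb
      (hmem (sm b) ⟨hs, le_refl _⟩).2
  · intro σ hσ
    show ψ (cl σ) ∈ Dε ∧ sm (ψ (cl σ)) = σ
    rw [hclid _ hσ]
    exact ⟨hγ.1 (hmem σ hσ).1, (hmem σ hσ).2⟩

lemma CReach.reach {Dε : Set (ℝ × ℝ)} {a b : ℝ × ℝ} (h : CReach Dε a b) :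
    Reach Dε a b := by
  obtain ⟨hs, φ, hφ, hA, hB, hI⟩ := h
  refine ⟨φ '' Icc (sm a) (sm b), ⟨?_, ?_, ?_⟩,
    ⟨sm a, ⟨le_refl _, hs⟩, hA⟩, ⟨sm b, ⟨hs, le_refl _⟩, hB⟩⟩
  · rintro p ⟨σ, hσ, rfl⟩; exact (hI σ hσ).1
  · exact ⟨⟨a, ⟨sm a, ⟨le_refl _, hs⟩, hA⟩⟩,
      isPreconnected_Icc.image _ hφ.continuous.continuousOn⟩
  · rintro p ⟨σ, _, rfl⟩ q ⟨τ, _, rfl⟩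
    rcases le_total σ τ with hle | hle
    · obtain ⟨h1, h2, _, _⟩ := hφ σ τ hle
      nlinarith
    · obtain ⟨h1, h2, _, _⟩ := hφ τ σ hle
      nlinarith

lemma CReach.trans {Dε : Set (ℝ × ℝ)} {a b c : ℝ × ℝ} (h1 : CReach Dε a b)
    (h2 : CReach Dε b c) : CReach Dε a c := by
  obtain ⟨hs1, φ1, hm1, ha1, hb1, hI1⟩ := h1
  obtain ⟨hs2, φ2, hm2, hb2, hc2, hI2⟩ := h2
  refine ⟨hs1.trans hs2, fun σ => if σ ≤ sm b then φ1 σ else φ2 σ, ?_, ?_, ?_, ?_⟩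
  · intro σ τ hστ
    by_cases hσ : σ ≤ sm b <;> by_cases hτ : τ ≤ sm b
    · simp only [if_pos hσ, if_pos hτ]; exact hm1 σ τ hστ
    · simp only [if_pos hσ, if_neg hτ]
      obtain ⟨e1, e2, e3, e4⟩ := hm1 σ (sm b) hσ
      obtain ⟨f1, f2, f3, f4⟩ := hm2 (sm b) τ (le_of_not_ge hτ)
      rw [hb1] at e1 e2 e3 e4
      rw [hb2] at f1 f2 f3 f4
      refine ⟨by linarith, by linarith, by linarith, by linarith⟩
    · exact absurd (hστ.trans hτ) hσ
    · simp only [if_neg hσ, if_neg hτ]; exact hm2 σ τ hστ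
  · simp only [if_pos hs1]; exact ha1
  · by_cases hc : sm c ≤ sm b
    · have hbc : sm b = sm c := le_antisymm hs2 hc
      have : b = c := by rw [← hb2, ← hc2, hbc]
      simp only [if_pos hc, ← hbc, hb1, this]
      simp
    · simp only [if_neg hc]; exact hc2
  · intro σ hσ
    by_cases h : σ ≤ sm b
    · simp only [if_pos h]; exact hI1 σ ⟨hσ.1, h⟩
    · simp only [if_neg h]; exact hI2 σ ⟨(le_of_not_ge h), hσ.2⟩

end Stmt12aux
namespace Stmt12aux

lemma fCurve_natCast {k : ℕ} (x : ℕ → EuclideanSpace ℝ (Fin k)) (l : ℕ) :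
    fCurve x (l : ℝ) = x l := by
  simp [fCurve, Int.fract_natCast, Int.floor_natCast]

lemma fCurve_affine {k : ℕ} (x : ℕ → EuclideanSpace ℝ (Fin k)) (l : ℕ)
    (hl : 1 ≤ l) : ∀ u ∈ Icc ((l:ℝ)-1) (l:ℝ),
    fCurve x u = x (l-1) + (u - ((l:ℝ)-1)) • (x l - x (l-1)) := by
  intro u hu
  rcases eq_or_lt_of_le hu.2 with heq | hlt
  · subst heq
    rw [fCurve_natCast]
    have h1 : (l:ℝ) - ((l:ℝ)-1) = 1 := by ring
    rw [h1, one_smul]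
    abel
  · have hfl : ⌊u⌋ = (l:ℤ) - 1 := by
      rw [Int.floor_eq_iff]
      constructor
      · push_cast; linarith [hu.1]
      · push_cast; linarith
    have htn : ((l:ℤ) - 1).toNat = l - 1 := by omega
    have hsucc : (l - 1) + 1 = l := by omega
    have hfr : Int.fract u = u - ((l:ℝ) - 1) := by
      unfold Int.fract
      rw [hfl]
      push_cast
      ring
    unfold fCurve
    rw [hfl, htn, hsucc, hfr]
    module

lemma fCurveExt_affine {k m : ℕ} (x : ℕ → EuclideanSpace ℝ (Fin k))
    (hx : x m = x 0) (i' : ℕ) (h1 : 1 ≤ i') (h2 : i' ≤ 2*m) (hm : 1 ≤ m) :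
    ∃ a b : EuclideanSpace ℝ (Fin k),
      ∀ u ∈ Icc ((i':ℝ)-1) (i':ℝ), fCurveExt m x u = a + u • b := by
  by_cases hcase : i' ≤ m
  · refine ⟨x (i'-1) - ((i':ℝ)-1) • (x i' - x (i'-1)), x i' - x (i'-1), ?_⟩
    intro u hu
    have hum : u ≤ (m:ℝ) := hu.2.trans (by exact_mod_cast hcase)
    rw [fCurveExt, if_pos hum, fCurve_affine x i' h1 u hu]
    module
  · push_neg at hcase
    set l := i' - m with hldef
    have hl1 : 1 ≤ l := by omega
    have hil : (i':ℝ) = (m:ℝ) + (l:ℝ) := by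
      have : i' = m + l := by omega
      rw [this]; push_cast; ring
    refine ⟨x (l-1) - ((m:ℝ) + (l:ℝ) - 1) • (x l - x (l-1)), x l - x (l-1), ?_⟩
    intro u hu
    by_cases hum : u ≤ (m:ℝ)
    · have hl1' : (l:ℝ) ≤ 1 := by
        by_contra hcon
        push_neg at hcon
        have : (2:ℝ) ≤ (l:ℝ) := by
          have : 2 ≤ l := by exact_mod_cast (by exact_mod_cast hcon : (1:ℝ) < l)
          exact_mod_cast this
        have := hu.1
        rw [hil] at this
        linarith
      have hle : l = 1 := le_antisymm (by exact_mod_cast hl1') hl1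
      have hueq : u = (m:ℝ) := by
        have := hu.1
        rw [hil, hle] at this
        push_cast at this
        linarith
      subst hueq
      rw [fCurveExt, if_pos le_rfl, fCurve_natCast, hx, hle]
      simp only [Nat.sub_self, Nat.cast_one]
      module
    · rw [fCurveExt, if_neg hum]
      have hsub : u - (m:ℝ) ∈ Icc ((l:ℝ)-1) (l:ℝ) := by
        constructor
        · have := hu.1; rw [hil] at this; linarith
        · have := hu.2; rw [hil] at this; linarith
      rw [fCurve_affine x l hl1 (u - m) hsub]
      module

lemma cellD_closed (i' j' : ℕ) : IsClosed (cellD i' j') :=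
  (isClosed_Icc.prod isClosed_Icc)

lemma Dfull_closed (m n : ℕ) : IsClosed (Dfull m n) :=
  (isClosed_Icc.prod isClosed_Icc)

lemma cell_free_inter {k m n : ℕ} (x y : ℕ → EuclideanSpace ℝ (Fin k))
    (hx : x m = x 0) (ε : ℝ) (i' j' : ℕ)
    (hi1 : 1 ≤ i') (hi2 : i' ≤ 2*m) (hj1 : 1 ≤ j') (hm : 1 ≤ m) :
    IsClosed (Dfree m n x y ε ∩ cellD i' j') ∧
      Convex ℝ (Dfree m n x y ε ∩ cellD i' j') := by
  obtain ⟨a, b, hab⟩ := fCurveExt_affine x hx i' hi1 hi2 hm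
  set c : EuclideanSpace ℝ (Fin k) := y (j'-1) - ((j':ℝ)-1) • (y j' - y (j'-1))
    with hc
  set d : EuclideanSpace ℝ (Fin k) := y j' - y (j'-1) with hd
  have hcd : ∀ v ∈ Icc ((j':ℝ)-1) (j':ℝ), fCurve y v = c + v • d := by
    intro v hv
    rw [fCurve_affine y j' hj1 v hv, hc, hd]
    module
  set H : ℝ × ℝ → ℝ := fun p => ‖(a + p.1 • b) - (c + p.2 • d)‖ with hH
  have hkey : ∀ p ∈ cellD i' j',
      dist (fCurveExt m x p.1) (fCurve y p.2) = H p := by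
    intro p hp
    rw [hab p.1 hp.1, hcd p.2 hp.2, dist_eq_norm]
  have hE : Dfree m n x y ε ∩ cellD i' j' =
      (cellD i' j' ∩ Dfull m n) ∩ {p | H p ≤ ε} := by
    ext p
    constructor
    · rintro ⟨⟨hfull, hdist⟩, hcell⟩
      refine ⟨⟨hcell, hfull⟩, ?_⟩
      show H p ≤ ε
      rw [← hkey p hcell]
      exact hdist
    · rintro ⟨⟨hcell, hfull⟩, hle⟩
      refine ⟨⟨hfull, ?_⟩, hcell⟩
      rw [hkey p hcell]
      exact hle
  have hHcont : Continuous H := by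
    apply Continuous.norm
    exact ((continuous_const.add (continuous_fst.smul continuous_const)).sub
      (continuous_const.add (continuous_snd.smul continuous_const)))
  constructor
  · rw [hE]
    exact (((cellD_closed i' j').inter (Dfull_closed m n)).inter
      (isClosed_le hHcont continuous_const))
  · rw [hE]
    apply Convex.inter
    · exact Convex.inter ((convex_Icc _ _).prod (convex_Icc _ _))
        ((convex_Icc _ _).prod (convex_Icc _ _))
    · intro p hp q hq α β hα hβ hαβ
      obtain rfl : β = 1 - α := by linarith
      show H (α • p + (1-α) • q) ≤ ε
      have hvec : (a + (α • p + (1-α) • q).1 • b) - (c + (α • p + (1-α) • q).2 • d)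
          = α • ((a + p.1 • b) - (c + p.2 • d))
            + (1-α) • ((a + q.1 • b) - (c + q.2 • d)) := by
        simp only [Prod.fst_add, Prod.snd_add, Prod.smul_fst, Prod.smul_snd,
          smul_eq_mul]
        module
      rw [hH]
      simp only
      rw [hvec]
      calc ‖α • ((a + p.1 • b) - (c + p.2 • d))
            + (1-α) • ((a + q.1 • b) - (c + q.2 • d))‖
          ≤ ‖α • ((a + p.1 • b) - (c + p.2 • d))‖
            + ‖(1-α) • ((a + q.1 • b) - (c + q.2 • d))‖ := norm_add_le _ _
        _ = α * H p + (1-α) * H q := by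
            rw [norm_smul, norm_smul, Real.norm_of_nonneg hα,
              Real.norm_of_nonneg hβ]
        _ ≤ α * ε + (1-α) * ε := by
            have hp' : H p ≤ ε := hp
            have hq' : H q ≤ ε := hq
            have := mul_le_mul_of_nonneg_left hp' hα
            have := mul_le_mul_of_nonneg_left hq' hβ
            linarith
        _ = ε := by ring

lemma free_subset_full {k m n : ℕ} (x y : ℕ → EuclideanSpace ℝ (Fin k)) (ε : ℝ) :
    Dfree m n x y ε ⊆ Dfull m n := fun _ hp => hp.1

lemma free_closed {k m n : ℕ} (x y : ℕ → EuclideanSpace ℝ (Fin k))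
    (hx : x m = x 0) (ε : ℝ) (hm : 1 ≤ m) (hn : 1 ≤ n) :
    IsClosed (Dfree m n x y ε) := by
  have hcover : Dfree m n x y ε =
      ⋃ i' ∈ Finset.Icc 1 (2*m), ⋃ j' ∈ Finset.Icc 1 n,
        (Dfree m n x y ε ∩ cellD i' j') := by
    apply Subset.antisymm
    · intro p hp
      have hfull := hp.1
      obtain ⟨⟨hp10, hp12⟩, ⟨hp20, hp22⟩⟩ := hfull
      set i' := max 1 ⌈p.1⌉₊ with hi'
      set j' := max 1 ⌈p.2⌉₊ with hj'
      have hi'mem : i' ∈ Finset.Icc 1 (2*m) := by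
        simp only [Finset.mem_Icc]
        refine ⟨le_max_left _ _, max_le (by omega) (Nat.ceil_le.2 (by push_cast; linarith))⟩
      have hj'mem : j' ∈ Finset.Icc 1 n := by
        simp only [Finset.mem_Icc]
        exact ⟨le_max_left _ _, max_le hn (Nat.ceil_le.2 (by push_cast; linarith))⟩
      have hcell : p ∈ cellD i' j' := by
        constructor
        · constructor
          · rcases max_cases 1 ⌈p.1⌉₊ with ⟨hmax, _⟩ | ⟨hmax, _⟩ <;> rw [hi', hmax]
            · simpa using hp10
            · push_cast
              have := Nat.ceil_lt_add_one hp10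
              linarith
          · calc p.1 ≤ (⌈p.1⌉₊ : ℝ) := Nat.le_ceil _
              _ ≤ (i' : ℝ) := by exact_mod_cast le_max_right _ _
        · constructor
          · rcases max_cases 1 ⌈p.2⌉₊ with ⟨hmax, _⟩ | ⟨hmax, _⟩ <;> rw [hj', hmax]
            · simpa using hp20
            · push_cast
              have := Nat.ceil_lt_add_one hp20
              linarith
          · calc p.2 ≤ (⌈p.2⌉₊ : ℝ) := Nat.le_ceil _
              _ ≤ (j' : ℝ) := by exact_mod_cast le_max_right _ _
      exact Set.mem_biUnion hi'mem (Set.mem_biUnion hj'mem ⟨hp, hcell⟩)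
    · intro p hp
      simp only [Set.mem_iUnion] at hp
      obtain ⟨_, _, _, _, hp, _⟩ := hp
      exact hp
  rw [hcover]
  apply Set.Finite.isClosed_biUnion (Finset.Icc 1 (2*m)).finite_toSet
  intro i' hi'
  apply Set.Finite.isClosed_biUnion (Finset.Icc 1 n).finite_toSet
  intro j' hj'
  simp only [Finset.coe_Icc, Set.mem_Icc] at hi' hj'
  exact (cell_free_inter x y hx ε i' j' hi'.1 hi'.2 hj'.1 hm).1

end Stmt12aux
namespace Stmt12aux

lemma clamp01_mono {α β : ℝ} (h : α ≤ β) :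
    max 0 (min 1 α) ≤ max 0 (min 1 β) ∧
      max 0 (min 1 β) - max 0 (min 1 α) ≤ β - α := by
  simp only [max_def, min_def]
  split_ifs <;> constructor <;> linarith

lemma seg_creach {Dε C : Set (ℝ × ℝ)} (hC : Convex ℝ C) (hsub : C ⊆ Dε)
    {p q : ℝ × ℝ} (hp : p ∈ C) (hq : q ∈ C) (h1 : p.1 ≤ q.1) (h2 : p.2 ≤ q.2) :
    CReach Dε p q := by
  have hs : sm p ≤ sm q := add_le_add h1 h2
  rcases eq_or_lt_of_le hs with heq | hlt
  · have hpq : p = q := by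
      have e : p.1 + p.2 = q.1 + q.2 := heq
      exact Prod.ext (by linarith) (by linarith)
    subst hpq
    refine ⟨le_rfl, fun _ => p, ?_, rfl, rfl, ?_⟩
    · intro σ τ hστ
      refine ⟨le_rfl, le_rfl, ?_, ?_⟩ <;> · simp only [sub_self]; linarith
    · intro σ hσ
      have hσ' : σ = sm p := le_antisymm hσ.2 hσ.1
      exact ⟨hsub hp, by rw [hσ']⟩
  · set L := sm q - sm p with hL
    have hLpos : 0 < L := by rw [hL]; linarith
    have hd1 : 0 ≤ q.1 - p.1 := by linarith
    have hd2 : 0 ≤ q.2 - p.2 := by linarith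
    have hd1L : q.1 - p.1 ≤ L := by rw [hL]; unfold sm; linarith
    have hd2L : q.2 - p.2 ≤ L := by rw [hL]; unfold sm; linarith
    set t : ℝ → ℝ := fun σ => max 0 (min 1 ((σ - sm p)/L)) with ht
    have ht01 : ∀ σ, 0 ≤ t σ ∧ t σ ≤ 1 :=
      fun σ => ⟨le_max_left _ _, max_le zero_le_one (min_le_left _ _)⟩
    have htlip : ∀ σ τ, σ ≤ τ → t σ ≤ t τ ∧ t τ - t σ ≤ (τ - σ)/L := by
      intro σ τ h
      have hr : (σ - sm p)/L ≤ (τ - sm p)/L :=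
        div_le_div_of_nonneg_right (by linarith) hLpos.le
      obtain ⟨c1, c2⟩ := clamp01_mono hr
      refine ⟨c1, c2.trans ?_⟩
      rw [div_sub_div_same, show τ - sm p - (σ - sm p) = τ - σ by ring]
    have hid : ∀ σ ∈ Icc (sm p) (sm q), t σ = (σ - sm p)/L := by
      intro σ hσ
      show max 0 (min 1 ((σ - sm p)/L)) = (σ - sm p)/L
      have h0 : 0 ≤ (σ - sm p)/L := div_nonneg (by linarith [hσ.1]) hLpos.le
      have h1' : (σ - sm p)/L ≤ 1 := by
        rw [div_le_one hLpos]
        rw [hL]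
        linarith [hσ.2]
      rw [min_eq_right h1', max_eq_right h0]
      
    refine ⟨hs, fun σ => (p.1 + t σ * (q.1 - p.1), p.2 + t σ * (q.2 - p.2)),
      ?_, ?_, ?_, ?_⟩
    · intro σ τ hστ
      obtain ⟨hmono, hlip⟩ := htlip σ τ hστ
      have hdiv0 : 0 ≤ (τ - σ)/L := div_nonneg (by linarith) hLpos.le
      have hcan : (τ - σ)/L * L = τ - σ := div_mul_cancel₀ _ hLpos.ne'
      refine ⟨?_, ?_, ?_, ?_⟩
      · show p.1 + t σ * (q.1 - p.1) ≤ p.1 + t τ * (q.1 - p.1)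
        nlinarith
      · show p.2 + t σ * (q.2 - p.2) ≤ p.2 + t τ * (q.2 - p.2)
        nlinarith
      · show (p.1 + t τ * (q.1 - p.1)) - (p.1 + t σ * (q.1 - p.1)) ≤ τ - σ
        nlinarith [mul_le_mul_of_nonneg_right hlip hd1,
          mul_le_mul_of_nonneg_left hd1L hdiv0]
      · show (p.2 + t τ * (q.2 - p.2)) - (p.2 + t σ * (q.2 - p.2)) ≤ τ - σ
        nlinarith [mul_le_mul_of_nonneg_right hlip hd2,
          mul_le_mul_of_nonneg_left hd2L hdiv0]
    · have : t (sm p) = 0 := by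
        rw [hid (sm p) ⟨le_rfl, hs⟩, sub_self, zero_div]
      simp [this]
    · have : t (sm q) = 1 := by
        rw [hid (sm q) ⟨hs, le_rfl⟩, ← hL, div_self hLpos.ne']
      simp [this]
    · intro σ hσ
      have htσ := hid σ hσ
      have hcan : (σ - sm p)/L * L = σ - sm p := div_mul_cancel₀ _ hLpos.ne'
      constructor
      · apply hsub
        show (p.1 + t σ * (q.1 - p.1), p.2 + t σ * (q.2 - p.2)) ∈ C
        have heq : (p.1 + t σ * (q.1 - p.1), p.2 + t σ * (q.2 - p.2))
            = (1 - t σ) • p + t σ • q := by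
          apply Prod.ext <;>
            simp only [Prod.fst_add, Prod.snd_add, Prod.smul_fst, Prod.smul_snd,
              smul_eq_mul] <;> ring
        rw [heq]
        exact hC hp hq (by linarith [(ht01 σ).2]) (ht01 σ).1 (by ring)
      · show (p.1 + t σ * (q.1 - p.1)) + (p.2 + t σ * (q.2 - p.2)) = σ
        rw [htσ]
        have hLe : L = (q.1 - p.1) + (q.2 - p.2) := by rw [hL]; unfold sm; ring
        have hcan2 : (σ - sm p)/L * ((q.1 - p.1) + (q.2 - p.2))
            = σ - (p.1 + p.2) := by
          rw [← hLe, hcan]; rfl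
        linear_combination hcan2

end Stmt12aux
namespace Stmt12aux

lemma Reach.creach_strong {Dε : Set (ℝ × ℝ)} {a b : ℝ × ℝ} (h : Reach Dε a b)
    (hs : sm a ≤ sm b) :
    ∃ φ : ℝ → ℝ × ℝ, MonCurve φ ∧ φ (sm a) = a ∧ φ (sm b) = b ∧
      (∀ σ, φ σ ∈ Dε) ∧ (∀ σ, φ σ = φ (max (sm a) (min (sm b) σ))) ∧
      (∀ σ ∈ Icc (sm a) (sm b), sm (φ σ) = σ) := by
  classical
  obtain ⟨γ, hγ, ha, hb⟩ := h
  set ψ : ℝ → ℝ × ℝ := fun σ => if hh : ∃ c ∈ γ, sm c = σ then hh.choose else a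
    with hψdef
  have hmem : ∀ σ ∈ Icc (sm a) (sm b), ψ σ ∈ γ ∧ sm (ψ σ) = σ := by
    intro σ hσ
    have hex : ∃ c ∈ γ, sm c = σ := by
      have himg := hγ.2.1.isPreconnected.intermediate_value ha hb
        continuous_sm.continuousOn hσ
      obtain ⟨c, hc, hcσ⟩ := himg
      exact ⟨c, hc, hcσ⟩
    simp only [hψdef, dif_pos hex]
    exact ⟨hex.choose_spec.1, hex.choose_spec.2⟩
  set cl : ℝ → ℝ := fun σ => max (sm a) (min (sm b) σ) with hcl
  have hclmem : ∀ σ, cl σ ∈ Icc (sm a) (sm b) :=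
    fun σ => ⟨le_max_left _ _, max_le hs (min_le_left _ _)⟩
  have hclid : ∀ σ ∈ Icc (sm a) (sm b), cl σ = σ := by
    intro σ hσ
    simp only [hcl]
    rw [min_eq_right hσ.2, max_eq_right hσ.1]
  have hclmono : ∀ σ τ : ℝ, σ ≤ τ → cl σ ≤ cl τ ∧ cl τ - cl σ ≤ τ - σ := by
    intro σ τ hστ
    simp only [hcl, max_def, min_def]
    split_ifs <;> constructor <;> linarith
  refine ⟨fun σ => ψ (cl σ), ?_, ?_, ?_, ?_, ?_, ?_⟩
  · intro σ τ hστ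
    obtain ⟨hc1, hc2⟩ := hclmono σ τ hστ
    obtain ⟨hmσ, hsσ⟩ := hmem _ (hclmem σ)
    obtain ⟨hmτ, hsτ⟩ := hmem _ (hclmem τ)
    have hle := monPath_le hγ hmσ hmτ (by rw [hsσ, hsτ]; exact hc1)
    have e1 : sm (ψ (cl σ)) = cl σ := hsσ
    have e2 : sm (ψ (cl τ)) = cl τ := hsτ
    unfold sm at e1 e2
    refine ⟨hle.1, hle.2, by linarith [hle.2], by linarith [hle.1]⟩
  · show ψ (cl (sm a)) = a
    rw [hclid _ ⟨le_refl _, hs⟩]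
    exact monPath_inj hγ (hmem (sm a) ⟨le_refl _, hs⟩).1 ha
      (hmem (sm a) ⟨le_refl _, hs⟩).2
  · show ψ (cl (sm b)) = b
    rw [hclid _ ⟨hs, le_refl _⟩]
    exact monPath_inj hγ (hmem (sm b) ⟨hs, le_refl _⟩).1 hb
      (hmem (sm b) ⟨hs, le_refl _⟩).2
  · intro σ
    exact hγ.1 (hmem _ (hclmem σ)).1
  · intro σ
    show ψ (cl σ) = ψ (cl (cl σ))
    rw [hclid _ (hclmem σ)]
  · intro σ hσ
    show sm (ψ (cl σ)) = σ
    rw [hclid _ hσ]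
    exact (hmem σ hσ).2

/-- The data of a monotone curve from `w` to a point of the top side,
globally defined, clamped, with values in `Dε`. -/
def UpCurve (m n : ℕ) (Dε : Set (ℝ × ℝ)) (w : ℝ × ℝ) (φ : ℝ → ℝ × ℝ) (b : ℝ)
    : Prop :=
  MonCurve φ ∧ sm w ≤ b ∧ φ (sm w) = w ∧ φ b = (b - n, (n:ℝ)) ∧
  0 ≤ b - n ∧ b - n ≤ 2*(m:ℝ) ∧ (∀ σ, φ σ ∈ Dε) ∧
  (∀ σ, φ σ = φ (max (sm w) (min b σ))) ∧
  (∀ σ ∈ Icc (sm w) b, sm (φ σ) = σ)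

lemma gUp_upCurve {m n : ℕ} {Dε : Set (ℝ × ℝ)} (hsub : Dε ⊆ Dfull m n)
    {w : ℝ × ℝ} (hw : w ∈ gUp m n Dε) : ∃ φ b, UpCurve m n Dε w φ b := by
  obtain ⟨hwD, q, hqT, hre⟩ := hw
  obtain ⟨⟨hq0, hq2⟩, hqn⟩ := hqT
  simp only [mem_singleton_iff] at hqn
  by_cases hcase : sm w ≤ sm q
  · obtain ⟨φ, hφ, hA, hB, hD, hclamp, hsum⟩ := Reach.creach_strong hre hcase
    refine ⟨φ, sm q, hφ, hcase, hA, ?_, ?_, ?_, hD, hclamp, hsum⟩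
    · rw [hB]
      have : sm q = q.1 + q.2 := rfl
      rw [show sm q - (n:ℝ) = q.1 by rw [this, hqn]; ring]
      exact Prod.ext rfl hqn
    · show 0 ≤ sm q - n
      have : sm q = q.1 + q.2 := rfl
      rw [this, hqn]
      linarith
    · show sm q - n ≤ 2*(m:ℝ)
      have : sm q = q.1 + q.2 := rfl
      rw [this, hqn]
      linarith
  · push_neg at hcase
    -- q is componentwise below w, so w is itself on the top side
    obtain ⟨γ, hγ, hwγ, hqγ⟩ := hre
    have hle := monPath_le hγ hqγ hwγ hcase.le
    have hw2 : w.2 ≤ (n:ℝ) := (hsub hwD).2.2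
    have hw2n : w.2 = (n:ℝ) := le_antisymm hw2 (hqn ▸ hle.2)
    have hw1 : 0 ≤ w.1 := (hsub hwD).1.1
    have hw1' : w.1 ≤ 2*(m:ℝ) := (hsub hwD).1.2
    refine ⟨fun _ => w, sm w, ?_, le_rfl, rfl, ?_, ?_, ?_, fun _ => hwD, ?_, ?_⟩
    · intro σ τ hστ
      exact ⟨le_rfl, le_rfl, by simp only [sub_self]; linarith,
        by simp only [sub_self]; linarith⟩
    · have : sm w = w.1 + w.2 := rfl
      rw [show sm w - (n:ℝ) = w.1 by rw [this, hw2n]; ring]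
      show w = (w.1, (n:ℝ))
      exact Prod.ext rfl hw2n
    · show 0 ≤ sm w - n
      have : sm w = w.1 + w.2 := rfl
      rw [this, hw2n]; linarith
    · show sm w - n ≤ 2*(m:ℝ)
      have : sm w = w.1 + w.2 := rfl
      rw [this, hw2n]; linarith
    · intro σ; rfl
    · intro σ hσ
      have : σ = sm w := le_antisymm hσ.2 hσ.1
      rw [this]

lemma upCurve_mem_gUp {m n : ℕ} {Dε : Set (ℝ × ℝ)} {w : ℝ × ℝ}
    {φ : ℝ → ℝ × ℝ} {b : ℝ} (h : UpCurve m n Dε w φ b) : w ∈ gUp m n Dε := by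
  obtain ⟨hφ, hsb, hA, hB, hb0, hb2, hD, _, hsum⟩ := h
  have hsmb : sm ((b - (n:ℝ), (n:ℝ))) = b := by
    show (b - (n:ℝ)) + (n:ℝ) = b; ring
  refine ⟨hA ▸ hD (sm w), (b - n, (n:ℝ)), ⟨⟨hb0, hb2⟩, rfl⟩, ?_⟩
  apply CReach.reach
  exact ⟨by rw [hsmb]; exact hsb, φ, hφ, hA, by rw [hsmb]; exact hB,
    fun σ hσ => ⟨hD σ, hsum σ (by rw [hsmb] at hσ; exact hσ)⟩⟩

end Stmt12aux
namespace Stmt12aux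

open Filter Topology

lemma ulim_exists (U : Ultrafilter ℕ) {f : ℕ → ℝ} {A B : ℝ}
    (h : ∀ k, f k ∈ Icc A B) : ∃ c ∈ Icc A B, Tendsto f (U : Filter ℕ) (𝓝 c) := by
  have hle : (U.map f : Filter ℝ) ≤ 𝓟 (Icc A B) := by
    rw [Filter.le_principal_iff]
    exact Filter.mem_map.2 (Filter.univ_mem' h)
  obtain ⟨c, hc, hten⟩ := (isCompact_Icc (a := A) (b := B)).ultrafilter_le_nhds
    (U.map f) hle
  exact ⟨c, hc, hten⟩

lemma gUp_isClosed {m n : ℕ} {Dε : Set (ℝ × ℝ)} (hsub : Dε ⊆ Dfull m n)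
    (hcl : IsClosed Dε) : IsClosed (gUp m n Dε) := by
  apply IsSeqClosed.isClosed
  intro w w' hw hlim
  have H := fun k => gUp_upCurve hsub (hw k)
  choose φ b hU using H
  -- basic facts about the curves
  have hMC : ∀ k, MonCurve (φ k) := fun k => (hU k).1
  have hwb : ∀ k, sm (w k) ≤ b k := fun k => (hU k).2.1
  have hφw : ∀ k, φ k (sm (w k)) = w k := fun k => (hU k).2.2.1
  have hφb : ∀ k, φ k (b k) = (b k - n, (n:ℝ)) := fun k => (hU k).2.2.2.1
  have hb0 : ∀ k, 0 ≤ b k - n := fun k => (hU k).2.2.2.2.1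
  have hb2 : ∀ k, b k - n ≤ 2*(m:ℝ) := fun k => (hU k).2.2.2.2.2.1
  have hφD : ∀ k σ, φ k σ ∈ Dε := fun k => (hU k).2.2.2.2.2.2.1
  have hφcl : ∀ k σ, φ k σ = φ k (max (sm (w k)) (min (b k) σ)) :=
    fun k => (hU k).2.2.2.2.2.2.2.1
  have hφsum : ∀ k, ∀ σ ∈ Icc (sm (w k)) (b k), sm (φ k σ) = σ :=
    fun k => (hU k).2.2.2.2.2.2.2.2
  set U : Ultrafilter ℕ := Ultrafilter.of Filter.atTop with hUdef
  have hUle : (U : Filter ℕ) ≤ Filter.atTop := Ultrafilter.of_le _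
  -- bounds for coordinates
  have hbd1 : ∀ σ k, (φ k σ).1 ∈ Icc (0:ℝ) (2*(m:ℝ)) := fun σ k => (hsub (hφD k σ)).1
  have hbd2 : ∀ σ k, (φ k σ).2 ∈ Icc (0:ℝ) (n:ℝ) := fun σ k => (hsub (hφD k σ)).2
  have hbbd : ∀ k, b k ∈ Icc (n:ℝ) (2*(m:ℝ) + n) := by
    intro k
    constructor
    · linarith [hb0 k]
    · linarith [hb2 k]
  -- ultrafilter limits
  have h1 : ∀ σ : ℝ, ∃ c ∈ Icc (0:ℝ) (2*(m:ℝ)),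
      Tendsto (fun k => (φ k σ).1) (U : Filter ℕ) (𝓝 c) :=
    fun σ => ulim_exists U (fun k => hbd1 σ k)
  have h2 : ∀ σ : ℝ, ∃ c ∈ Icc (0:ℝ) (n:ℝ),
      Tendsto (fun k => (φ k σ).2) (U : Filter ℕ) (𝓝 c) :=
    fun σ => ulim_exists U (fun k => hbd2 σ k)
  choose Φ1 hΦ1m hΦ1 using h1
  choose Φ2 hΦ2m hΦ2 using h2
  obtain ⟨b', hb'm, hb'⟩ := ulim_exists U hbbd
  set ψ : ℝ → ℝ × ℝ := fun σ => (Φ1 σ, Φ2 σ) with hψ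
  have hpair : ∀ σ, Tendsto (fun k => φ k σ) (U : Filter ℕ) (𝓝 (ψ σ)) := by
    intro σ
    have := (hΦ1 σ).prodMk_nhds (hΦ2 σ)
    simpa using this
  -- limit of w along U
  have hlimU : Tendsto w (U : Filter ℕ) (𝓝 w') := hlim.mono_left hUle
  have hsmw : Tendsto (fun k => sm (w k)) (U : Filter ℕ) (𝓝 (sm w')) :=
    (continuous_sm.tendsto w').comp hlimU
  -- MonCurve ψ
  have hψMC : MonCurve ψ := by
    intro σ τ hστ
    refine ⟨?_, ?_, ?_, ?_⟩
    · exact le_of_tendsto_of_tendsto' (hΦ1 σ) (hΦ1 τ)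
        (fun k => ((hMC k) σ τ hστ).1)
    · exact le_of_tendsto_of_tendsto' (hΦ2 σ) (hΦ2 τ)
        (fun k => ((hMC k) σ τ hστ).2.1)
    · exact le_of_tendsto ((hΦ1 τ).sub (hΦ1 σ))
        (Filter.Eventually.of_forall (fun k => ((hMC k) σ τ hστ).2.2.1))
    · exact le_of_tendsto ((hΦ2 τ).sub (hΦ2 σ))
        (Filter.Eventually.of_forall (fun k => ((hMC k) σ τ hστ).2.2.2))
  -- dist control
  have hlip : ∀ k σ τ, dist (φ k σ) (φ k τ) ≤ dist σ τ :=
    fun k => (hMC k).dist_le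
  -- ψ (sm w') = w'
  have hkey1 : Tendsto (fun k => φ k (sm w')) (U : Filter ℕ) (𝓝 w') := by
    have hd : Tendsto (fun k => dist (w k) (φ k (sm w'))) (U : Filter ℕ) (𝓝 0) := by
      have hb : ∀ k, dist (w k) (φ k (sm w')) ≤ dist (sm (w k)) (sm w') := by
        intro k
        calc dist (w k) (φ k (sm w'))
            = dist (φ k (sm (w k))) (φ k (sm w')) := by rw [hφw k]
          _ ≤ dist (sm (w k)) (sm w') := hlip k _ _
      have hg : Tendsto (fun k => dist (sm (w k)) (sm w')) (U : Filter ℕ) (𝓝 0) :=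
        tendsto_iff_dist_tendsto_zero.1 hsmw
      exact squeeze_zero (fun k => dist_nonneg) hb hg
    exact hlimU.congr_dist hd
  have hψw : ψ (sm w') = w' := tendsto_nhds_unique (hpair (sm w')) hkey1
  -- ψ b' = (b' - n, n)
  have hkey2 : Tendsto (fun k => φ k b') (U : Filter ℕ) (𝓝 (b' - n, (n:ℝ))) := by
    have htop : Tendsto (fun k => φ k (b k)) (U : Filter ℕ) (𝓝 (b' - n, (n:ℝ))) := by
      have : Tendsto (fun k => ((b k - n : ℝ), (n:ℝ))) (U : Filter ℕ)
          (𝓝 (b' - n, (n:ℝ))) :=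
        (hb'.sub tendsto_const_nhds).prodMk_nhds tendsto_const_nhds
      refine this.congr (fun k => ?_)
      rw [hφb k]
    have hd : Tendsto (fun k => dist (φ k (b k)) (φ k b')) (U : Filter ℕ) (𝓝 0) := by
      have hb : ∀ k, dist (φ k (b k)) (φ k b') ≤ dist (b k) b' := fun k => hlip k _ _
      exact squeeze_zero (fun k => dist_nonneg) hb
        (tendsto_iff_dist_tendsto_zero.1 hb')
    exact htop.congr_dist hd
  have hψb : ψ b' = (b' - n, (n:ℝ)) := tendsto_nhds_unique (hpair b') hkey2
  -- inequalities in the limit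
  have hsb' : sm w' ≤ b' := le_of_tendsto_of_tendsto' hsmw hb' hwb
  have hb'0 : 0 ≤ b' - n := by linarith [hb'm.1]
  have hb'2 : b' - n ≤ 2*(m:ℝ) := by linarith [hb'm.2]
  -- membership of values
  have hψD : ∀ σ, ψ σ ∈ Dε := fun σ =>
    hcl.mem_of_tendsto (hpair σ) (Filter.Eventually.of_forall (fun k => hφD k σ))
  -- sums on the interval
  have hψsum : ∀ σ ∈ Icc (sm w') b', sm (ψ σ) = σ := by
    intro σ hσ
    have hc : Tendsto (fun k => max (sm (w k)) (min (b k) σ)) (U : Filter ℕ)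
        (𝓝 (max (sm w') (min b' σ))) :=
      hsmw.max (hb'.min tendsto_const_nhds)
    have hclampid : max (sm w') (min b' σ) = σ := by
      rw [min_eq_right hσ.2, max_eq_right hσ.1]
    rw [hclampid] at hc
    have hsum : ∀ k, sm (φ k σ) = max (sm (w k)) (min (b k) σ) := by
      intro k
      rw [hφcl k σ]
      apply hφsum k
      constructor
      · exact le_max_left _ _
      · exact max_le (hwb k) (min_le_left _ _)
    have hts : Tendsto (fun k => sm (φ k σ)) (U : Filter ℕ) (𝓝 σ) := by
      refine hc.congr (fun k => (hsum k).symm)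
    have hts2 : Tendsto (fun k => sm (φ k σ)) (U : Filter ℕ) (𝓝 (sm (ψ σ))) :=
      (continuous_sm.tendsto (ψ σ)).comp (hpair σ)
    exact tendsto_nhds_unique hts2 hts
  -- conclude
  have hUC : UpCurve m n Dε w' ψ b' := by
    refine ⟨hψMC, hsb', hψw, hψb, hb'0, hb'2, hψD, ?_, hψsum⟩
    intro σ
    set cσ := max (sm w') (min b' σ) with hcσdef
    have hcmem : cσ ∈ Icc (sm w') b' :=
      ⟨le_max_left _ _, max_le hsb' (min_le_left _ _)⟩
    have hc1 : Tendsto (fun k => max (sm (w k)) (min (b k) σ)) (U : Filter ℕ)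
        (𝓝 cσ) := hsmw.max (hb'.min tendsto_const_nhds)
    have hc2 : Tendsto (fun k => max (sm (w k)) (min (b k) cσ)) (U : Filter ℕ)
        (𝓝 (max (sm w') (min b' cσ))) := hsmw.max (hb'.min tendsto_const_nhds)
    have hid2 : max (sm w') (min b' cσ) = cσ := by
      rw [min_eq_right hcmem.2, max_eq_right hcmem.1]
    rw [hid2] at hc2
    have hdist : Tendsto (fun k => dist (φ k σ) (φ k cσ)) (U : Filter ℕ) (𝓝 0) := by
      apply squeeze_zero (g := fun k =>
          dist (max (sm (w k)) (min (b k) σ)) (max (sm (w k)) (min (b k) cσ)))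
        (fun k => dist_nonneg) ?_ ?_
      · intro k
        calc dist (φ k σ) (φ k cσ)
            = dist (φ k (max (sm (w k)) (min (b k) σ)))
                (φ k (max (sm (w k)) (min (b k) cσ))) := by
              rw [← hφcl k σ, ← hφcl k cσ]
          _ ≤ _ := hlip k _ _
      · have := hc1.dist hc2
        simpa using this
    have hten : Tendsto (fun k => φ k cσ) (U : Filter ℕ) (𝓝 (ψ σ)) :=
      (hpair σ).congr_dist hdist
    exact (tendsto_nhds_unique (hpair cσ) hten).symm
  exact upCurve_mem_gUp hUC

end Stmt12aux
namespace Stmt12aux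

lemma CReach.mem_right {Dε : Set (ℝ × ℝ)} {a b : ℝ × ℝ} (h : CReach Dε a b) :
    b ∈ Dε := by
  obtain ⟨hs, φ, hMC, hA, hB, hI⟩ := h
  have := (hI (sm b) ⟨hs, le_rfl⟩).1
  rwa [hB] at this

lemma upCurve_creach {m n : ℕ} {Dε : Set (ℝ × ℝ)} {w : ℝ × ℝ}
    {φ : ℝ → ℝ × ℝ} {b : ℝ} (h : UpCurve m n Dε w φ b) :
    CReach Dε w ((b - n : ℝ), (n:ℝ)) := by
  obtain ⟨hφ, hsb, hA, hB, hb0, hb2, hD, _, hsum⟩ := h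
  have hsmb : sm ((b - (n:ℝ), (n:ℝ))) = b := by
    show (b - (n:ℝ)) + (n:ℝ) = b; ring
  exact ⟨by rw [hsmb]; exact hsb, φ, hφ, hA, by rw [hsmb]; exact hB,
    fun σ hσ => ⟨hD σ, hsum σ (by rw [hsmb] at hσ; exact hσ)⟩⟩

lemma trchain {i j : ℕ} {q' q : ℝ × ℝ} (hq' : q' ∈ cellT i j ∪ cellR i j)
    (hq : q ∈ cellT i j ∪ cellR i j) (hσ : q'.1 - q'.2 ≤ q.1 - q.2) :
    prec q' q := by
  rcases hq' with ⟨h1, h2⟩ | ⟨h1, h2⟩ <;> rcases hq with ⟨g1, g2⟩ | ⟨g1, g2⟩ <;>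
    simp only [mem_singleton_iff] at h1 h2 g1 g2
  · exact ⟨by linarith, by linarith⟩
  · exact ⟨by linarith [h1.2], by linarith [g2.2]⟩
  · exact ⟨by linarith [g1.2, h2.2], by linarith [g1.2, h2.2]⟩
  · exact ⟨by linarith, by linarith [h2.1, h2.2, g2.1, g2.2]⟩

lemma TR_subset_cellD {i j : ℕ} : cellT i j ∪ cellR i j ⊆ cellD i j := by
  rintro q (⟨h1, h2⟩ | ⟨h1, h2⟩) <;> simp only [mem_singleton_iff] at *
  · exact ⟨h1, by rw [h2]; exact ⟨by linarith, le_rfl⟩⟩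
  · exact ⟨by rw [h1]; exact ⟨by linarith, le_rfl⟩, h2⟩

lemma cross {Dε : Set (ℝ × ℝ)} {i j n : ℕ} {p : ℝ × ℝ} {u₀ : ℝ}
    (hp : p ∈ cellD i j) (hjn : (j:ℝ) ≤ (n:ℝ))
    (h : CReach Dε p (u₀, (n:ℝ))) :
    ∃ w, w ∈ (cellT i j ∪ cellR i j) ∧ p.1 ≤ w.1 ∧ p.2 ≤ w.2 ∧
      CReach Dε p w ∧ CReach Dε w (u₀, (n:ℝ)) := by
  obtain ⟨hs, φ, hMC, hA, hB, hI⟩ := h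
  have hend : sm ((u₀, (n:ℝ))) = u₀ + n := rfl
  set e := u₀ + (n:ℝ) with hedef
  rw [hend] at hs hB hI
  set g : ℝ → ℝ := fun σ => max ((φ σ).1 - i) ((φ σ).2 - j) with hg
  have hgcont : Continuous g :=
    ((continuous_fst.comp hMC.continuous).sub continuous_const).max
      ((continuous_snd.comp hMC.continuous).sub continuous_const)
  have hg0 : g (sm p) ≤ 0 := by
    rw [hg]
    simp only [hA]
    exact max_le (by linarith [hp.1.2]) (by linarith [hp.2.2])
  have hg1 : 0 ≤ g e := by
    rw [hg]
    simp only [hB]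
    exact le_max_of_le_right (by linarith)
  have hIVT := intermediate_value_Icc hs hgcont.continuousOn
  obtain ⟨σw, hσw, hgσw⟩ := hIVT ⟨hg0, hg1⟩
  set w := φ σw with hwdef
  have hsumw : sm w = σw := (hI σw hσw).2
  have hwD : w ∈ Dε := (hI σw hσw).1
  have hple : p.1 ≤ w.1 ∧ p.2 ≤ w.2 := by
    have := hMC (sm p) σw hσw.1
    rw [hA] at this
    exact ⟨this.1, this.2.1⟩
  have hw1 : w.1 ≤ (i:ℝ) := by
    have : (w.1 - i) ≤ g σw := le_max_left _ _
    rw [hgσw] at this; linarith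
  have hw2 : w.2 ≤ (j:ℝ) := by
    have : (w.2 - j) ≤ g σw := le_max_right _ _
    rw [hgσw] at this; linarith
  have hwTR : w ∈ cellT i j ∪ cellR i j := by
    have hgσw' : max ((φ σw).1 - ↑i) ((φ σw).2 - ↑j) = 0 := hgσw
    rcases max_choice ((φ σw).1 - (i:ℝ)) ((φ σw).2 - (j:ℝ)) with hc | hc <;>
      rw [hc] at hgσw'
    · right
      refine ⟨by simp only [mem_singleton_iff]; show w.1 = (i:ℝ); linarith [hgσw'], ?_, hw2⟩
      calc (j:ℝ) - 1 ≤ p.2 := by linarith [hp.2.1]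
        _ ≤ w.2 := hple.2
    · left
      refine ⟨⟨?_, hw1⟩, by simp only [mem_singleton_iff]; show w.2 = (j:ℝ); linarith [hgσw']⟩
      calc (i:ℝ) - 1 ≤ p.1 := by linarith [hp.1.1]
        _ ≤ w.1 := hple.1
  refine ⟨w, hwTR, hple.1, hple.2, ?_, ?_⟩
  · refine ⟨by rw [hsumw]; exact hσw.1, φ, hMC, hA, by rw [hsumw], ?_⟩
    intro σ hσ
    rw [hsumw] at hσ
    exact hI σ ⟨hσ.1, hσ.2.trans hσw.2⟩
  · refine ⟨by rw [hsumw, hend]; exact hσw.2, φ, hMC, by rw [hsumw],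
      by rw [hend]; exact hB, ?_⟩
    intro σ hσ
    rw [hsumw, hend] at hσ
    exact hI σ ⟨hσw.1.trans hσ.1, hσ.2⟩

lemma csSup_le_csSup' {A B : Set ℝ} (hA : A.Nonempty) (hB : BddAbove B)
    (h : ∀ a ∈ A, ∃ b ∈ B, a ≤ b) : sSup A ≤ sSup B :=
  csSup_le hA (fun a ha => by
    obtain ⟨b, hbB, hab⟩ := h a ha
    exact hab.trans (le_csSup hB hbB))

end Stmt12aux
open Stmt12aux in
theorem stmt12
    (k m n : ℕ) (hk : 1 ≤ k) (hm : 1 ≤ m) (hn : 1 ≤ n)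
    (x y : ℕ → EuclideanSpace ℝ (Fin k)) (hx : x m = x 0) (hy : y n = y 0)
    (ε : ℝ) (hε : 0 ≤ ε)
    (Dε : Set (ℝ × ℝ)) (hDε : Dε = Dfree m n x y ε)
    (i j : ℕ) (hi1 : 1 ≤ i) (hi2 : i ≤ 2*m) (hj1 : 1 ≤ j) (hj2 : j ≤ n) :
    ∀ p ∈ gUp m n Dε ∩ (cellL i j ∪ cellB i j),
      ∃ q : ℝ × ℝ,
        (q ∈ gUp m n Dε ∩ (cellT i j ∪ cellR i j) ∧ p.1 ≤ q.1 ∧ p.2 ≤ q.2) ∧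
        (∀ q' : ℝ × ℝ,
          q' ∈ gUp m n Dε ∩ (cellT i j ∪ cellR i j) → p.1 ≤ q'.1 → p.2 ≤ q'.2 →
            prec q' q) ∧
        rUp m n Dε p = rUp m n Dε q := by
  subst hDε
  intro p hp
  obtain ⟨hpg, hpLB⟩ := hp
  have hjn : (j:ℝ) ≤ (n:ℝ) := Nat.cast_le.2 hj2
  have hsubfull : Dfree m n x y ε ⊆ Dfull m n := free_subset_full x y ε
  have hclosed : IsClosed (Dfree m n x y ε) := free_closed x y hx ε hm hn
  have hgcl : IsClosed (gUp m n (Dfree m n x y ε)) := gUp_isClosed hsubfull hclosed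
  obtain ⟨hcellcl, hcellconv⟩ := cell_free_inter x y hx ε i j hi1 hi2 hj1 hm
  have hpD : p ∈ Dfree m n x y ε := hpg.1
  have hpcell : p ∈ cellD i j := by
    rcases hpLB with ⟨h1, h2⟩ | ⟨h1, h2⟩ <;> simp only [mem_singleton_iff] at h1 h2
    · exact ⟨by rw [h1]; exact ⟨le_rfl, by linarith⟩, h2⟩
    · exact ⟨h1, by rw [h2]; exact ⟨le_rfl, by linarith⟩⟩
  set TR := cellT i j ∪ cellR i j with hTRdef
  set S := gUp m n (Dfree m n x y ε) ∩
    (TR ∩ {q : ℝ × ℝ | p.1 ≤ q.1} ∩ {q : ℝ × ℝ | p.2 ≤ q.2}) with hSdef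
  have hTRclosed : IsClosed TR :=
    (isClosed_Icc.prod isClosed_singleton).union
      (isClosed_singleton.prod isClosed_Icc)
  have hSclosed : IsClosed S :=
    hgcl.inter ((hTRclosed.inter
      (isClosed_le continuous_const continuous_fst)).inter
      (isClosed_le continuous_const continuous_snd))
  have hScell : S ⊆ cellD i j := fun q hq => TR_subset_cellD hq.2.1.1
  have hScompact : IsCompact S :=
    (isCompact_Icc.prod isCompact_Icc).of_isClosed_subset hSclosed hScell
  -- nonemptiness of S
  obtain ⟨φp, bp, hUCp⟩ := gUp_upCurve hsubfull hpg
  have hbp0 : 0 ≤ bp - n := hUCp.2.2.2.2.1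
  have hbp2 : bp - n ≤ 2*(m:ℝ) := hUCp.2.2.2.2.2.1
  have hCptop := upCurve_creach hUCp
  obtain ⟨w0, hw0TR, hw01, hw02, hCpw0, hCw0top⟩ := cross hpcell hjn hCptop
  have hw0g : w0 ∈ gUp m n (Dfree m n x y ε) :=
    ⟨hCpw0.mem_right, ⟨(bp - n, (n:ℝ)), ⟨⟨hbp0, hbp2⟩, rfl⟩, hCw0top.reach⟩⟩
  have hSne : S.Nonempty := ⟨w0, hw0g, ⟨hw0TR, hw01⟩, hw02⟩
  -- the maximal element
  obtain ⟨qs, hqsS, hqsmax'⟩ := hScompact.exists_isMaxOn hSne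
    ((continuous_fst.sub continuous_snd).continuousOn)
  have hqsmax : ∀ q' ∈ S, q'.1 - q'.2 ≤ qs.1 - qs.2 := fun q' hq' => hqsmax' hq'
  have hqsg : qs ∈ gUp m n (Dfree m n x y ε) := hqsS.1
  have hqsTR : qs ∈ TR := hqsS.2.1.1
  have hqs1 : p.1 ≤ qs.1 := hqsS.2.1.2
  have hqs2 : p.2 ≤ qs.2 := hqsS.2.2
  have hqsD : qs ∈ Dfree m n x y ε := hqsg.1
  have hqscell : qs ∈ cellD i j := TR_subset_cellD hqsTR
  have hCpqs : CReach (Dfree m n x y ε) p qs :=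
    seg_creach hcellconv inter_subset_left ⟨hpD, hpcell⟩ ⟨hqsD, hqscell⟩ hqs1 hqs2
  -- the two pointer sets
  set Sp := {u : ℝ | u ∈ Icc (0:ℝ) (2*(m:ℝ)) ∧
    Reach (Dfree m n x y ε) p (u, (n:ℝ))} with hSpdef
  set Sq := {u : ℝ | u ∈ Icc (0:ℝ) (2*(m:ℝ)) ∧
    Reach (Dfree m n x y ε) qs (u, (n:ℝ))} with hSqdef
  have hSpbdd : BddAbove Sp := BddAbove.mono (fun u hu => hu.1) bddAbove_Icc
  have hSqbdd : BddAbove Sq := BddAbove.mono (fun u hu => hu.1) bddAbove_Icc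
  have hSpne : Sp.Nonempty := ⟨bp - n, ⟨hbp0, hbp2⟩, hCptop.reach⟩
  obtain ⟨χ, bq, hUCq⟩ := gUp_upCurve hsubfull hqsg
  have hCqstop := upCurve_creach hUCq
  obtain ⟨hMCχ, hsqb, hAχ, hBχ, hbq0, hbq2, hχD, hχcl, hχsum⟩ := hUCq
  have hSqne : Sq.Nonempty := ⟨bq - n, ⟨hbq0, hbq2⟩, hCqstop.reach⟩
  refine ⟨qs, ⟨⟨hqsg, hqsTR⟩, hqs1, hqs2⟩, ?_, ?_⟩
  · intro q' hq' h1 h2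
    exact trchain hq'.2 hqsTR (hqsmax q' ⟨hq'.1, ⟨hq'.2, h1⟩, h2⟩)
  · have e1 : rUp m n (Dfree m n x y ε) p = sSup Sp := rfl
    have e2 : rUp m n (Dfree m n x y ε) qs = sSup Sq := rfl
    rw [e1, e2]
    apply le_antisymm
    · -- sSup Sp ≤ sSup Sq
      apply csSup_le_csSup' hSpne hSqbdd
      intro u hu
      obtain ⟨huI, hur⟩ := hu
      by_cases hcu : u ≤ bq - n
      · exact ⟨bq - n, ⟨⟨hbq0, hbq2⟩, hCqstop.reach⟩, hcu⟩
      push_neg at hcu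
      have hq1u : qs.1 ≤ bq - n := by
        have hmono := (hMCχ (sm qs) bq hsqb).1
        rw [hAχ, hBχ] at hmono
        exact hmono
      have hsp : sm p ≤ u + (n:ℝ) := by
        by_contra hcon
        push_neg at hcon
        obtain ⟨γ, hγ, hpγ, huγ⟩ := hur
        have hle := monPath_le hγ huγ hpγ (le_of_lt hcon)
        have : u ≤ p.1 := hle.1
        linarith
      have hcr : CReach (Dfree m n x y ε) p (u, (n:ℝ)) :=
        Reach.creach hur hsp
      obtain ⟨w, hwTR, hw1, hw2, hCpw, hCwu⟩ := cross hpcell hjn hcr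
      have hwD : w ∈ Dfree m n x y ε := hCpw.mem_right
      have hwg : w ∈ gUp m n (Dfree m n x y ε) :=
        ⟨hwD, ⟨(u, (n:ℝ)), ⟨huI, rfl⟩, hCwu.reach⟩⟩
      have hwS : w ∈ S := ⟨hwg, ⟨hwTR, hw1⟩, hw2⟩
      have hprec : prec w qs := trchain hwTR hqsTR (hqsmax w hwS)
      obtain ⟨hswu, φ, hMCφ, hAφ, hBφ, hIφ⟩ := hCwu
      have hend : sm ((u, (n:ℝ))) = u + n := rfl
      rw [hend] at hswu hBφ hIφ
      have hwn : w.2 ≤ (n:ℝ) := (hsubfull hwD).2.2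
      have hw_sum : sm w = w.1 + w.2 := rfl
      have hqs_sum : sm qs = qs.1 + qs.2 := rfl
      have hsw1 : sm w ≤ bq := by
        rw [hw_sum]
        have := hprec.1
        linarith
      have hσ01 : max (sm w) (sm qs) ≤ bq := max_le hsw1 hsqb
      have hσ1u : bq ≤ u + (n:ℝ) := by linarith
      set Δ : ℝ → ℝ := fun σ => (φ σ).1 - (χ σ).1 with hΔdef
      have hΔcont : Continuous Δ :=
        (continuous_fst.comp hMCφ.continuous).sub
          (continuous_fst.comp hMCχ.continuous)
      have hΔ0 : Δ (max (sm w) (sm qs)) ≤ 0 := by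
        rcases max_cases (sm w) (sm qs) with ⟨hmeq, hge⟩ | ⟨hmeq, hlt⟩
        · show (φ (max (sm w) (sm qs))).1 - (χ (max (sm w) (sm qs))).1 ≤ 0
          rw [hmeq, hAφ]
          have hmono := (hMCχ (sm qs) (sm w) hge).1
          rw [hAχ] at hmono
          linarith [hprec.1]
        · show (φ (max (sm w) (sm qs))).1 - (χ (max (sm w) (sm qs))).1 ≤ 0
          rw [hmeq, hAχ]
          have hmm := (hMCφ (sm w) (sm qs) hlt.le).2.1
          rw [hAφ] at hmm
          have hsum := (hIφ (sm qs) ⟨hlt.le, by linarith⟩).2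
          have hsum' : (φ (sm qs)).1 + (φ (sm qs)).2 = qs.1 + qs.2 := hsum
          linarith [hprec.2]
      have hΔ1 : 0 ≤ Δ bq := by
        show 0 ≤ (φ bq).1 - (χ bq).1
        rw [hBχ]
        have hφmem := hIφ bq ⟨hsw1, hσ1u⟩
        have hφn : (φ bq).2 ≤ (n:ℝ) := (hsubfull hφmem.1).2.2
        have hφsum : (φ bq).1 + (φ bq).2 = bq := hφmem.2
        show 0 ≤ (φ bq).1 - (bq - (n:ℝ))
        linarith
      obtain ⟨σs, hσs, hΔσs⟩ :=
        intermediate_value_Icc hσ01 hΔcont.continuousOn ⟨hΔ0, hΔ1⟩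
      have hσsw : sm w ≤ σs := le_trans (le_max_left _ _) hσs.1
      have hσsq : sm qs ≤ σs := le_trans (le_max_right _ _) hσs.1
      have hσsu : σs ≤ u + (n:ℝ) := le_trans hσs.2 hσ1u
      have hφmem := hIφ σs ⟨hσsw, hσsu⟩
      have hχsum' := hχsum σs ⟨hσsq, hσs.2⟩
      have hΔσs' : (φ σs).1 - (χ σs).1 = 0 := hΔσs
      have hzeq : φ σs = χ σs := by
        have h1 : (φ σs).1 = (χ σs).1 := by linarith
        have e1 : (φ σs).1 + (φ σs).2 = σs := hφmem.2
        have e2 : (χ σs).1 + (χ σs).2 = σs := hχsum'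
        exact Prod.ext h1 (by linarith)
      have hsmz : sm (χ σs) = σs := hχsum'
      have hCqz : CReach (Dfree m n x y ε) qs (χ σs) := by
        refine ⟨by rw [hsmz]; exact hσsq, χ, hMCχ, hAχ, by rw [hsmz], ?_⟩
        intro σ hσ
        rw [hsmz] at hσ
        exact ⟨hχD σ, hχsum σ ⟨hσ.1, hσ.2.trans hσs.2⟩⟩
      have hsmz' : sm (φ σs) = σs := hφmem.2
      have hCzu : CReach (Dfree m n x y ε) (φ σs) (u, (n:ℝ)) := by
        refine ⟨by rw [hend, hsmz']; exact hσsu, φ, hMCφ, by rw [hsmz'],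
          by rw [hend]; exact hBφ, ?_⟩
        intro σ hσ
        rw [hend, hsmz'] at hσ
        exact hIφ σ ⟨hσsw.trans hσ.1, hσ.2⟩
      have hfin : CReach (Dfree m n x y ε) qs (u, (n:ℝ)) :=
        hCqz.trans (hzeq ▸ hCzu)
      exact ⟨u, ⟨huI, hfin.reach⟩, le_rfl⟩
    · -- sSup Sq ≤ sSup Sp
      apply csSup_le_csSup' hSqne hSpbdd
      intro u hu
      obtain ⟨huI, hur⟩ := hu
      by_cases hc : sm qs ≤ u + (n:ℝ)
      · have hcr := Reach.creach hur hc
        exact ⟨u, ⟨huI, (hCpqs.trans hcr).reach⟩, le_rfl⟩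
      · push_neg at hc
        obtain ⟨γ, hγ, hqγ, huγ⟩ := hur
        have hle := monPath_le hγ huγ hqγ (le_of_lt hc)
        have hqsn : qs.2 = (n:ℝ) := le_antisymm (hsubfull hqsD).2.2 hle.2
        have hqs' : qs = (qs.1, (n:ℝ)) := Prod.ext rfl hqsn
        refine ⟨qs.1, ⟨⟨(hsubfull hqsD).1.1, (hsubfull hqsD).1.2⟩, ?_⟩, hle.1⟩
        rw [← hqs']
        exact hCpqs.reach
end
end

section
/- For each i ∈ {1,…,2m} and j ∈ {1,…,n}, the pointer r_↓ is constant on g_↓ ∩ R_ij: for any two points (i,v), (i,v') ∈ g_↓ ∩ R_ij, r_↓(i,v) = r_↓(i,v'). -/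
open Set

noncomputable section

lemma both_le {p q : ℝ × ℝ} (h : (p.1 - q.1) * (p.2 - q.2) ≥ 0)
    (hs : p.1 + p.2 ≤ q.1 + q.2) : p.1 ≤ q.1 ∧ p.2 ≤ q.2 := by
  constructor <;> nlinarith [sq_nonneg (p.1 - q.1), sq_nonneg (p.2 - q.2)]

lemma trunc_lip {γ : Set (ℝ × ℝ)}
    (hmono : ∀ p ∈ γ, ∀ q ∈ γ, (p.1 - q.1) * (p.2 - q.2) ≥ 0)
    {p : ℝ × ℝ} (hp : p ∈ γ) :
    LipschitzOnWith 2 (fun q : ℝ × ℝ => if q.1 + q.2 ≤ p.1 + p.2 then q else p) γ := by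
  apply LipschitzOnWith.of_dist_le_mul
  intro q hq q' hq'
  have key : ∀ a ∈ γ, ∀ b ∈ γ, a.1 + a.2 ≤ p.1 + p.2 → ¬ (b.1 + b.2 ≤ p.1 + p.2) →
      dist a p ≤ 2 * dist a b := by
    intro a ha b hb hale hbgt
    push_neg at hbgt
    have h1 := both_le (hmono a ha p hp) hale
    have hd : dist a b = max |a.1 - b.1| |a.2 - b.2| := by
      rw [Prod.dist_eq, Real.dist_eq, Real.dist_eq]
    have hsum : (b.1 + b.2) - (a.1 + a.2) ≤ |a.1 - b.1| + |a.2 - b.2| := by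
      have := abs_sub_abs_le_abs_sub b.1 a.1
      calc (b.1 + b.2) - (a.1 + a.2) = (b.1 - a.1) + (b.2 - a.2) := by ring
        _ ≤ |b.1 - a.1| + |b.2 - a.2| := by
            gcongr <;> exact le_abs_self _
        _ = |a.1 - b.1| + |a.2 - b.2| := by rw [abs_sub_comm, abs_sub_comm a.2]
    have hb1 : |a.1 - b.1| ≤ dist a b := by rw [hd]; exact le_max_left _ _
    have hb2 : |a.2 - b.2| ≤ dist a b := by rw [hd]; exact le_max_right _ _
    have hdp : dist a p = max |a.1 - p.1| |a.2 - p.2| := by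
      rw [Prod.dist_eq, Real.dist_eq, Real.dist_eq]
    rw [hdp]
    apply max_le
    · rw [abs_of_nonpos (by linarith [h1.1])]
      linarith [h1.2]
    · rw [abs_of_nonpos (by linarith [h1.2])]
      linarith [h1.1]
  by_cases hq1 : q.1 + q.2 ≤ p.1 + p.2 <;> by_cases hq2 : q'.1 + q'.2 ≤ p.1 + p.2 <;>
    simp only [hq1, hq2, if_true, if_false, if_pos, if_neg]
  · push_cast
    nlinarith [dist_nonneg (x := q) (y := q')]
  · have := key q hq q' hq' hq1 hq2
    push_cast
    linarith
  · have := key q' hq' q hq hq2 hq1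
    rw [dist_comm p q', dist_comm q q']  -- goal dist p q' ≤ 2 dist q q'
    push_cast
    linarith
  · simp

lemma trunc_conn_le {γ : Set (ℝ × ℝ)} (hconn : IsConnected γ)
    (hmono : ∀ p ∈ γ, ∀ q ∈ γ, (p.1 - q.1) * (p.2 - q.2) ≥ 0)
    {p : ℝ × ℝ} (hp : p ∈ γ) :
    IsConnected {q ∈ γ | q.1 + q.2 ≤ p.1 + p.2} := by
  have himg : (fun q : ℝ × ℝ => if q.1 + q.2 ≤ p.1 + p.2 then q else p) '' γ
      = {q ∈ γ | q.1 + q.2 ≤ p.1 + p.2} := by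
    ext q
    constructor
    · rintro ⟨r, hr, rfl⟩
      by_cases h : r.1 + r.2 ≤ p.1 + p.2
      · simp only [h, if_true]; exact ⟨hr, h⟩
      · simp only [h, if_false]; exact ⟨hp, le_refl _⟩
    · rintro ⟨hqγ, hqc⟩
      exact ⟨q, hqγ, by simp [hqc]⟩
  rw [← himg]
  exact hconn.image _ (trunc_lip hmono hp).continuousOn

lemma trunc_lip_ge {γ : Set (ℝ × ℝ)}
    (hmono : ∀ p ∈ γ, ∀ q ∈ γ, (p.1 - q.1) * (p.2 - q.2) ≥ 0)
    {p : ℝ × ℝ} (hp : p ∈ γ) :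
    LipschitzOnWith 2 (fun q : ℝ × ℝ => if p.1 + p.2 ≤ q.1 + q.2 then q else p) γ := by
  apply LipschitzOnWith.of_dist_le_mul
  intro q hq q' hq'
  have key : ∀ a ∈ γ, ∀ b ∈ γ, p.1 + p.2 ≤ a.1 + a.2 → ¬ (p.1 + p.2 ≤ b.1 + b.2) →
      dist a p ≤ 2 * dist a b := by
    intro a ha b hb hale hbgt
    push_neg at hbgt
    have h1 := both_le (hmono p hp a ha) hale
    have hd : dist a b = max |a.1 - b.1| |a.2 - b.2| := by
      rw [Prod.dist_eq, Real.dist_eq, Real.dist_eq]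
    have hsum : (a.1 + a.2) - (b.1 + b.2) ≤ |a.1 - b.1| + |a.2 - b.2| := by
      calc (a.1 + a.2) - (b.1 + b.2) = (a.1 - b.1) + (a.2 - b.2) := by ring
        _ ≤ |a.1 - b.1| + |a.2 - b.2| := by gcongr <;> exact le_abs_self _
    have hb1 : |a.1 - b.1| ≤ dist a b := by rw [hd]; exact le_max_left _ _
    have hb2 : |a.2 - b.2| ≤ dist a b := by rw [hd]; exact le_max_right _ _
    have hdp : dist a p = max |a.1 - p.1| |a.2 - p.2| := by
      rw [Prod.dist_eq, Real.dist_eq, Real.dist_eq]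
    rw [hdp]
    apply max_le
    · rw [abs_of_nonneg (by linarith [h1.1])]
      linarith [h1.2]
    · rw [abs_of_nonneg (by linarith [h1.2])]
      linarith [h1.1]
  by_cases hq1 : p.1 + p.2 ≤ q.1 + q.2 <;> by_cases hq2 : p.1 + p.2 ≤ q'.1 + q'.2 <;>
    simp only [hq1, hq2, if_true, if_false, if_pos, if_neg]
  · push_cast
    nlinarith [dist_nonneg (x := q) (y := q')]
  · have := key q hq q' hq' hq1 hq2
    push_cast
    linarith
  · have := key q' hq' q hq hq2 hq1
    rw [dist_comm p q', dist_comm q q']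
    push_cast
    linarith
  · simp

lemma trunc_conn_ge {γ : Set (ℝ × ℝ)} (hconn : IsConnected γ)
    (hmono : ∀ p ∈ γ, ∀ q ∈ γ, (p.1 - q.1) * (p.2 - q.2) ≥ 0)
    {p : ℝ × ℝ} (hp : p ∈ γ) :
    IsConnected {q ∈ γ | p.1 + p.2 ≤ q.1 + q.2} := by
  have himg : (fun q : ℝ × ℝ => if p.1 + p.2 ≤ q.1 + q.2 then q else p) '' γ
      = {q ∈ γ | p.1 + p.2 ≤ q.1 + q.2} := by
    ext q
    constructor
    · rintro ⟨r, hr, rfl⟩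
      by_cases h : p.1 + p.2 ≤ r.1 + r.2
      · simp only [h, if_true]; exact ⟨hr, h⟩
      · simp only [h, if_false]; exact ⟨hp, le_refl _⟩
    · rintro ⟨hqγ, hqc⟩
      exact ⟨q, hqγ, by simp [hqc]⟩
  rw [← himg]
  exact hconn.image _ (trunc_lip_ge hmono hp).continuousOn

lemma phi_inj {p q : ℝ × ℝ} (h : (p.1 - q.1) * (p.2 - q.2) ≥ 0)
    (hs : p.1 + p.2 = q.1 + q.2) : p = q := by
  have h' : (q.1 - p.1) * (q.2 - p.2) ≥ 0 := by nlinarith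
  have h1 := both_le h hs.le
  have h2 := both_le h' hs.ge
  exact Prod.ext (le_antisymm h1.1 h2.1) (le_antisymm h1.2 h2.2)

noncomputable def sel (γ : Set (ℝ × ℝ)) (w : ℝ) : ℝ := sSup {a : ℝ | (a, w - a) ∈ γ}

lemma sel_spec {γ : Set (ℝ × ℝ)}
    (hmono : ∀ p ∈ γ, ∀ q ∈ γ, (p.1 - q.1) * (p.2 - q.2) ≥ 0)
    {r : ℝ × ℝ} (hr : r ∈ γ) : sel γ (r.1 + r.2) = r.1 := by
  have hset : {a : ℝ | (a, (r.1 + r.2) - a) ∈ γ} = {r.1} := by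
    ext a
    simp only [mem_setOf_eq, mem_singleton_iff]
    constructor
    · intro ha
      have := phi_inj (hmono _ ha r hr) (by simp)
      exact congrArg Prod.fst this
    · rintro rfl
      have : (r.1, r.1 + r.2 - r.1) = r := by
        ext <;> simp
      rw [this]; exact hr
  rw [sel, hset, csSup_singleton]

lemma exists_phi {γ : Set (ℝ × ℝ)} (hc : IsConnected γ) {p q : ℝ × ℝ}
    (hp : p ∈ γ) (hq : q ∈ γ) {w : ℝ} (h1 : p.1 + p.2 ≤ w) (h2 : w ≤ q.1 + q.2) :
    ∃ r ∈ γ, r.1 + r.2 = w := by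
  have hcont : ContinuousOn (fun r : ℝ × ℝ => r.1 + r.2) γ :=
    (continuous_fst.add continuous_snd).continuousOn
  have := hc.isPreconnected.intermediate_value hp hq hcont
  obtain ⟨r, hr, hrw⟩ := this ⟨h1, h2⟩
  exact ⟨r, hr, hrw⟩

lemma sel_lip {γ : Set (ℝ × ℝ)}
    (hmono : ∀ p ∈ γ, ∀ q ∈ γ, (p.1 - q.1) * (p.2 - q.2) ≥ 0)
    {s t : ℝ} (hsur : ∀ w ∈ Icc s t, ∃ r ∈ γ, r.1 + r.2 = w) :
    ContinuousOn (sel γ) (Icc s t) := by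
  apply LipschitzOnWith.continuousOn (K := 1)
  apply LipschitzOnWith.of_dist_le_mul
  intro w hw w' hw'
  obtain ⟨r, hr, hrw⟩ := hsur w hw
  obtain ⟨r', hr', hrw'⟩ := hsur w' hw'
  have e1 : sel γ w = r.1 := by rw [← hrw]; exact sel_spec hmono hr
  have e2 : sel γ w' = r'.1 := by rw [← hrw']; exact sel_spec hmono hr'
  rw [e1, e2, Real.dist_eq, Real.dist_eq]
  push_cast
  rw [one_mul]
  rcases le_total w w' with h | h
  · have hle := both_le (hmono r hr r' hr') (by rw [hrw, hrw']; exact h)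
    rw [abs_of_nonpos (by linarith [hle.1]), abs_of_nonpos (by linarith)]
    have : r'.2 - r.2 ≥ 0 := by linarith [hle.2]
    nlinarith [hrw, hrw']
  · have hle := both_le (hmono r' hr' r hr) (by rw [hrw, hrw']; exact h)
    rw [abs_of_nonneg (by linarith [hle.1]), abs_of_nonneg (by linarith)]
    nlinarith [hle.2]

lemma crossing {γ δ : Set (ℝ × ℝ)}
    (hγc : IsConnected γ) (hγm : ∀ p ∈ γ, ∀ q ∈ γ, (p.1 - q.1) * (p.2 - q.2) ≥ 0)
    (hδc : IsConnected δ) (hδm : ∀ p ∈ δ, ∀ q ∈ δ, (p.1 - q.1) * (p.2 - q.2) ≥ 0)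
    {cγ cδ dγ dδ : ℝ × ℝ}
    (hcγ : cγ ∈ γ) (hcδ : cδ ∈ δ) (hdγ : dγ ∈ γ) (hdδ : dδ ∈ δ)
    (hφc : cγ.1 + cγ.2 = cδ.1 + cδ.2) (hφd : dγ.1 + dγ.2 = dδ.1 + dδ.2)
    (hst : cγ.1 + cγ.2 ≤ dγ.1 + dγ.2)
    (hc1 : cδ.1 ≤ cγ.1) (hd1 : dγ.1 ≤ dδ.1) :
    ∃ e, e ∈ γ ∧ e ∈ δ ∧ cγ.1 + cγ.2 ≤ e.1 + e.2 ∧ e.1 + e.2 ≤ dγ.1 + dγ.2 := by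
  have hsurγ : ∀ w ∈ Icc (cγ.1 + cγ.2) (dγ.1 + dγ.2), ∃ r ∈ γ, r.1 + r.2 = w := fun w hw =>
    exists_phi hγc hcγ hdγ hw.1 hw.2
  have hsurδ : ∀ w ∈ Icc (cγ.1 + cγ.2) (dγ.1 + dγ.2), ∃ r ∈ δ, r.1 + r.2 = w := fun w hw =>
    exists_phi hδc hcδ hdδ (by rw [← hφc]; exact hw.1) (by rw [← hφd]; exact hw.2)
  have hFc : ContinuousOn (fun w => sel γ w - sel δ w) (Icc (cγ.1 + cγ.2) (dγ.1 + dγ.2)) :=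
    (sel_lip hγm hsurγ).sub (sel_lip hδm hsurδ)
  have hF0 : (0:ℝ) ∈ Icc (sel γ (dγ.1 + dγ.2) - sel δ (dγ.1 + dγ.2))
      (sel γ (cγ.1 + cγ.2) - sel δ (cγ.1 + cγ.2)) := by
    have e1 : sel γ (cγ.1 + cγ.2) = cγ.1 := sel_spec hγm hcγ
    have e2 : sel δ (cγ.1 + cγ.2) = cδ.1 := by rw [hφc]; exact sel_spec hδm hcδ
    have e3 : sel γ (dγ.1 + dγ.2) = dγ.1 := sel_spec hγm hdγ
    have e4 : sel δ (dγ.1 + dγ.2) = dδ.1 := by rw [hφd]; exact sel_spec hδm hdδ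
    rw [e1, e2, e3, e4]
    constructor <;> linarith
  obtain ⟨w, hw, hFw⟩ := intermediate_value_Icc' hst hFc hF0
  obtain ⟨r, hr, hrw⟩ := hsurγ w hw
  obtain ⟨r', hr', hrw'⟩ := hsurδ w hw
  have hFw' : sel γ w - sel δ w = 0 := hFw
  have e1 : sel γ w = r.1 := by rw [← hrw]; exact sel_spec hγm hr
  have e2 : sel δ w = r'.1 := by rw [← hrw']; exact sel_spec hδm hr'
  have hfst : r.1 = r'.1 := by rw [e1, e2] at hFw'; linarith
  have hrr : r = r' := by
    ext
    · exact hfst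
    · have h1 : r.2 = w - r.1 := by linarith
      have h2 : r'.2 = w - r'.1 := by linarith
      rw [h1, h2, hfst]
  refine ⟨r, hr, ?_, by rw [hrw]; exact hw.1, by rw [hrw]; exact hw.2⟩
  rw [hrr]; exact hr'

lemma splice {Dep γ δ : Set (ℝ × ℝ)} (hγ : IsMonPath Dep γ) (hδ : IsMonPath Dep δ)
    {e a b : ℝ × ℝ} (heγ : e ∈ γ) (heδ : e ∈ δ) (haγ : a ∈ γ) (hbδ : b ∈ δ)
    (ha : a.1 + a.2 ≤ e.1 + e.2) (hb : e.1 + e.2 ≤ b.1 + b.2) :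
    ∃ P, IsMonPath Dep P ∧ a ∈ P ∧ b ∈ P := by
  obtain ⟨hγs, hγc, hγm⟩ := hγ
  obtain ⟨hδs, hδc, hδm⟩ := hδ
  refine ⟨{q ∈ γ | q.1 + q.2 ≤ e.1 + e.2} ∪ {q ∈ δ | e.1 + e.2 ≤ q.1 + q.2},
    ⟨?_, ?_, ?_⟩, Or.inl ⟨haγ, ha⟩, Or.inr ⟨hbδ, hb⟩⟩
  · rintro q (⟨hq, -⟩ | ⟨hq, -⟩)
    exacts [hγs hq, hδs hq]
  · exact IsConnected.union ⟨e, ⟨heγ, le_refl _⟩, ⟨heδ, le_refl _⟩⟩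
      (trunc_conn_le hγc hγm heγ) (trunc_conn_ge hδc hδm heδ)
  · rintro p (⟨hp, hp2⟩ | ⟨hp, hp2⟩) q (⟨hq, hq2⟩ | ⟨hq, hq2⟩)
    · exact hγm p hp q hq
    · have h1 := both_le (hγm p hp e heγ) hp2
      have h2 := both_le (hδm e heδ q hq) hq2
      nlinarith [h1.1, h1.2, h2.1, h2.2]
    · have h1 := both_le (hγm q hq e heγ) hq2
      have h2 := both_le (hδm e heδ p hp) hp2
      nlinarith [h1.1, h1.2, h2.1, h2.2]
    · exact hδm p hp q hq

lemma seg_path (Dep : Set (ℝ × ℝ)) (c v v' : ℝ) (hvv : v ≤ v')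
    (hsub : ∀ t ∈ Icc v v', ((c, t) : ℝ × ℝ) ∈ Dep) :
    IsMonPath Dep ((fun t => ((c : ℝ), t)) '' Icc v v') := by
  refine ⟨?_, ?_, ?_⟩
  · rintro q ⟨t, ht, rfl⟩
    exact hsub t ht
  · exact (isConnected_Icc hvv).image _ (Continuous.continuousOn (by fun_prop))
  · rintro p ⟨t, ht, rfl⟩ q ⟨s, hs, rfl⟩
    simp

lemma fCurve_eval {k : ℕ} (y : ℕ → EuclideanSpace ℝ (Fin k)) {j : ℕ} (hj : 1 ≤ j)
    {s : ℝ} (h1 : (j : ℝ) - 1 ≤ s) (h2 : s ≤ j) :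
    fCurve y s = ((j : ℝ) - s) • y (j - 1) + (s - ((j : ℝ) - 1)) • y j := by
  rcases eq_or_lt_of_le h2 with rfl | hlt
  · unfold fCurve
    rw [Int.fract_natCast, Int.floor_natCast, Int.toNat_natCast]
    have hj1 : ((j : ℝ)) - ((j : ℝ) - 1) = 1 := by ring
    rw [sub_self, hj1]
    simp
  · have hfl : ⌊s⌋ = (j : ℤ) - 1 := by
      rw [Int.floor_eq_iff]
      constructor
      · push_cast; linarith
      · push_cast; linarith
    have htn : ⌊s⌋.toNat = j - 1 := by rw [hfl]; omega
    have hfr : Int.fract s = s - ((j : ℝ) - 1) := by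
      rw [Int.fract, hfl]; push_cast; ring
    unfold fCurve
    rw [htn, hfr]
    have hjj : j - 1 + 1 = j := by omega
    rw [hjj]
    have : (1 : ℝ) - (s - ((j : ℝ) - 1)) = (j : ℝ) - s := by ring
    rw [this]

lemma seg_free {k : ℕ} (y : ℕ → EuclideanSpace ℝ (Fin k)) {j : ℕ} (hj : 1 ≤ j)
    (c : EuclideanSpace ℝ (Fin k)) {ε a b t : ℝ}
    (hja : (j : ℝ) - 1 ≤ a) (hjb : b ≤ j) (hat : a ≤ t) (htb : t ≤ b)
    (hda : dist c (fCurve y a) ≤ ε) (hdb : dist c (fCurve y b) ≤ ε) :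
    dist c (fCurve y t) ≤ ε := by
  have hab : a ≤ b := le_trans hat htb
  rcases eq_or_lt_of_le hab with rfl | hl
  · have : t = a := le_antisymm htb hat
    rw [this]; exact hda
  · set θ := (t - a) / (b - a) with hθ
    have hθ0 : 0 ≤ θ := div_nonneg (by linarith) (by linarith)
    have hθ1 : θ ≤ 1 := by
      rw [hθ, div_le_one (by linarith)]; linarith
    have hne : b - a ≠ 0 := ne_of_gt (by linarith)
    have hcomb : t = (1 - θ) * a + θ * b := by
      have h := div_mul_cancel₀ (t - a) hne
      linear_combination -h
    have ea := fCurve_eval y hj hja (by linarith : a ≤ (j : ℝ))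
    have eb := fCurve_eval y hj (by linarith : (j : ℝ) - 1 ≤ b) hjb
    have et := fCurve_eval y hj (by linarith : (j : ℝ) - 1 ≤ t) (by linarith : t ≤ (j : ℝ))
    have key : fCurve y t = (1 - θ) • fCurve y a + θ • fCurve y b := by
      rw [ea, eb, et]
      match_scalars <;> (rw [hcomb]; ring)
    have hdiff : c - fCurve y t = (1 - θ) • (c - fCurve y a) + θ • (c - fCurve y b) := by
      rw [key]; module
    rw [dist_eq_norm] at hda hdb ⊢
    rw [hdiff]
    calc ‖(1 - θ) • (c - fCurve y a) + θ • (c - fCurve y b)‖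
        ≤ ‖(1 - θ) • (c - fCurve y a)‖ + ‖θ • (c - fCurve y b)‖ := norm_add_le _ _
      _ = (1 - θ) * ‖c - fCurve y a‖ + θ * ‖c - fCurve y b‖ := by
          rw [norm_smul, norm_smul, Real.norm_eq_abs, Real.norm_eq_abs,
            abs_of_nonneg (by linarith), abs_of_nonneg hθ0]
      _ ≤ (1 - θ) * ε + θ * ε := by gcongr <;> linarith
      _ = ε := by ring

lemma fst_le_of_mul {a b c : ℝ} (h : (a - b) * c ≥ 0) (hc : 0 < c) : b ≤ a := by
  nlinarith

theorem stmt13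
    (k m n : ℕ) (hk : 1 ≤ k) (hm : 1 ≤ m) (hn : 1 ≤ n)
    (x y : ℕ → EuclideanSpace ℝ (Fin k)) (hx : x m = x 0) (hy : y n = y 0)
    (ε : ℝ) (hε : 0 ≤ ε)
    (Dε : Set (ℝ × ℝ)) (hDε : Dε = Dfree m n x y ε)
    (i j : ℕ) (hi1 : 1 ≤ i) (hi2 : i ≤ 2*m) (hj1 : 1 ≤ j) (hj2 : j ≤ n) :
    ∀ v v' : ℝ, ((i:ℝ), v) ∈ gDown m Dε ∩ cellR i j →
      ((i:ℝ), v') ∈ gDown m Dε ∩ cellR i j →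
      rDown m Dε ((i:ℝ), v) = rDown m Dε ((i:ℝ), v') := by
  have h2m : (i : ℝ) ≤ 2 * (m : ℝ) := by exact_mod_cast Nat.cast_le.mpr hi2
  have hi0 : (0 : ℝ) ≤ (i : ℝ) := Nat.cast_nonneg i
  have hj1' : (1 : ℝ) ≤ (j : ℝ) := by exact_mod_cast hj1
  have hj0 : (0 : ℝ) ≤ (j : ℝ) - 1 := by linarith
  have hjn : (j : ℝ) ≤ (n : ℝ) := Nat.cast_le.mpr hj2
  have hDmem : ∀ p ∈ Dε, (0 ≤ p.1 ∧ p.1 ≤ 2 * (m : ℝ)) ∧ (0 ≤ p.2 ∧ p.2 ≤ (n : ℝ)) ∧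
      dist (fCurveExt m x p.1) (fCurve y p.2) ≤ ε := by
    rw [hDε]
    rintro p ⟨⟨h1, h2⟩, h3⟩
    exact ⟨h1, h2, h3⟩
  have hDmem' : ∀ u t : ℝ, 0 ≤ u → u ≤ 2 * (m : ℝ) → 0 ≤ t → t ≤ (n : ℝ) →
      dist (fCurveExt m x u) (fCurve y t) ≤ ε → ((u, t) : ℝ × ℝ) ∈ Dε := by
    rw [hDε]
    intro u t h1 h2 h3 h4 h5
    exact ⟨⟨⟨h1, h2⟩, ⟨h3, h4⟩⟩, h5⟩
  suffices key : ∀ v v' : ℝ, ((i:ℝ), v) ∈ gDown m Dε ∩ cellR i j →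
      ((i:ℝ), v') ∈ gDown m Dε ∩ cellR i j → v ≤ v' →
      rDown m Dε ((i:ℝ), v) = rDown m Dε ((i:ℝ), v') by
    intro v v' hv hv'
    rcases le_total v v' with h | h
    exacts [key v v' hv hv' h, (key v' v hv' hv h).symm]
  intro v v' hv hv' hvv'
  obtain ⟨hgd, hcell⟩ := hv
  obtain ⟨hgd', hcell'⟩ := hv'
  simp only [cellR, mem_prod, mem_singleton_iff, mem_Icc] at hcell hcell'
  obtain ⟨-, hvj1, hvj2⟩ := hcell
  obtain ⟨-, hvj1', hvj2'⟩ := hcell'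
  simp only [gDown, Bside, mem_setOf_eq, mem_prod, mem_singleton_iff, mem_Icc] at hgd hgd'
  obtain ⟨hDv, q0, ⟨⟨hq01, hq02⟩, hq0z⟩, hreach0⟩ := hgd
  obtain ⟨hDv', q0', ⟨⟨hq01', hq02'⟩, hq0z'⟩, hreach0'⟩ := hgd'
  have hq0eq : ((q0.1, (0:ℝ)) : ℝ × ℝ) = q0 := Prod.ext rfl hq0z.symm
  have hq0eq' : ((q0'.1, (0:ℝ)) : ℝ × ℝ) = q0' := Prod.ext rfl hq0z'.symm
  -- the vertical segment on the right edge is free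
  have hvfree : ∀ t ∈ Icc v v', ((i:ℝ), t) ∈ Dε := by
    intro t ht
    apply hDmem' _ _ hi0 h2m (by linarith [ht.1]) (by linarith [ht.2])
    exact seg_free y hj1 (fCurveExt m x (i:ℝ)) hvj1 hvj2' ht.1 ht.2
      (hDmem _ hDv).2.2 (hDmem _ hDv').2.2
  have hS : IsMonPath Dε ((fun t => ((i:ℝ), t)) '' Icc v v') :=
    seg_path Dε (i:ℝ) v v' hvv' hvfree
  have hmemSv : ((i:ℝ), v) ∈ (fun t => ((i:ℝ), t)) '' Icc v v' :=
    ⟨v, ⟨le_refl v, hvv'⟩, rfl⟩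
  have hmemSv' : ((i:ℝ), v') ∈ (fun t => ((i:ℝ), t)) '' Icc v v' :=
    ⟨v', ⟨hvv', le_refl v'⟩, rfl⟩
  rcases eq_or_lt_of_le hvv' with rfl | hlt
  · rfl
  by_cases hv0 : v = 0
  · -- bottom case : v = 0, r↓(i,0) = i and sSup for v' is also i
    subst hv0
    have hv'0 : v' ≠ 0 := (ne_of_gt hlt)
    have hub : ∀ w ∈ {u : ℝ | u ∈ Icc (0:ℝ) (2*(m:ℝ)) ∧ Reach Dε ((i:ℝ), v') (u, 0)},
        w ≤ (i:ℝ) := by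
      rintro w ⟨-, γ, ⟨-, -, hmono⟩, hpγ, hqγ⟩
      have h := hmono ((i:ℝ), v') hpγ (w, 0) hqγ
      exact fst_le_of_mul (by simpa using h) hlt
    have him : (i:ℝ) ∈ {u : ℝ | u ∈ Icc (0:ℝ) (2*(m:ℝ)) ∧ Reach Dε ((i:ℝ), v') (u, 0)} :=
      ⟨⟨hi0, h2m⟩, _, hS, hmemSv', hmemSv⟩
    have e1 : rDown m Dε ((i:ℝ), (0:ℝ)) = (i:ℝ) := if_pos rfl
    have e2 : rDown m Dε ((i:ℝ), v') =
        sSup {u : ℝ | u ∈ Icc (0:ℝ) (2*(m:ℝ)) ∧ Reach Dε ((i:ℝ), v') (u, 0)} := if_neg hv'0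
    rw [e1, e2]
    exact le_antisymm (le_csSup ⟨(i:ℝ), hub⟩ him) (csSup_le ⟨_, him⟩ hub)
  · -- interior case : 0 < v < v'
    have hvpos : 0 < v := lt_of_le_of_ne (le_trans hj0 hvj1) (Ne.symm hv0)
    have hv'pos : 0 < v' := lt_trans hvpos hlt
    have e1 : rDown m Dε ((i:ℝ), v) =
        sSup {u : ℝ | u ∈ Icc (0:ℝ) (2*(m:ℝ)) ∧ Reach Dε ((i:ℝ), v) (u, 0)} := if_neg hv0
    have e2 : rDown m Dε ((i:ℝ), v') =
        sSup {u : ℝ | u ∈ Icc (0:ℝ) (2*(m:ℝ)) ∧ Reach Dε ((i:ℝ), v') (u, 0)} :=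
      if_neg (ne_of_gt hv'pos)
    rw [e1, e2]
    -- notation
    have hbdd : BddAbove {u : ℝ | u ∈ Icc (0:ℝ) (2*(m:ℝ)) ∧ Reach Dε ((i:ℝ), v) (u, 0)} :=
      ⟨2*(m:ℝ), fun w hw => hw.1.2⟩
    have hbdd' : BddAbove {u : ℝ | u ∈ Icc (0:ℝ) (2*(m:ℝ)) ∧ Reach Dε ((i:ℝ), v') (u, 0)} :=
      ⟨2*(m:ℝ), fun w hw => hw.1.2⟩
    have hne : q0.1 ∈ {u : ℝ | u ∈ Icc (0:ℝ) (2*(m:ℝ)) ∧ Reach Dε ((i:ℝ), v) (u, 0)} := by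
      refine ⟨⟨hq01, hq02⟩, ?_⟩
      rw [hq0eq]; exact hreach0
    have hne' : q0'.1 ∈ {u : ℝ | u ∈ Icc (0:ℝ) (2*(m:ℝ)) ∧ Reach Dε ((i:ℝ), v') (u, 0)} := by
      refine ⟨⟨hq01', hq02'⟩, ?_⟩
      rw [hq0eq']; exact hreach0'
    have hsub : {u : ℝ | u ∈ Icc (0:ℝ) (2*(m:ℝ)) ∧ Reach Dε ((i:ℝ), v) (u, 0)} ⊆
        {u : ℝ | u ∈ Icc (0:ℝ) (2*(m:ℝ)) ∧ Reach Dε ((i:ℝ), v') (u, 0)} := by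
      rintro w ⟨hwI, γ, hγ, hpγ, hqγ⟩
      have hwi : w ≤ (i:ℝ) := by
        have h := hγ.2.2 ((i:ℝ), v) hpγ (w, 0) hqγ
        exact fst_le_of_mul (by simpa using h) hvpos
      obtain ⟨P, hP, haP, hbP⟩ := splice hγ hS hpγ hmemSv hqγ hmemSv'
        (by simp only; linarith only [hwi, hvpos]) (by simp only; linarith only [hlt])
      exact ⟨hwI, P, hP, hbP, haP⟩
    apply le_antisymm
    · exact csSup_le_csSup hbdd' ⟨_, hne⟩ hsub
    · apply csSup_le ⟨_, hne'⟩
      rintro w ⟨hwI, γ, hγ, hpγ', hqγ⟩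
      have hwi : w ≤ (i:ℝ) := by
        have h := hγ.2.2 ((i:ℝ), v') hpγ' (w, 0) hqγ
        exact fst_le_of_mul (by simpa using h) hv'pos
      rcases le_total w q0.1 with hle | hge
      · exact le_trans hle (le_csSup hbdd hne)
      · obtain ⟨δ, hδ, hpδ, hq0δ⟩ := hreach0
        rw [← hq0eq] at hq0δ
        -- find δ-point at level w
        obtain ⟨cδ, hcδ, hcδw⟩ := exists_phi hδ.2.1 hq0δ hpδ (w := w)
          (by simp only; linarith only [hge]) (by simp only; linarith only [hwi, hvpos])
        have hcδ2 : 0 ≤ cδ.2 := ((hDmem cδ (hδ.1 hcδ)).2.1).1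
        have hcδ1 : cδ.1 ≤ w := by linarith only [hcδ2, hcδw]
        -- find γ-point at level i+v
        obtain ⟨dγ, hdγ, hdγw⟩ := exists_phi hγ.2.1 hqγ hpγ' (w := (i:ℝ) + v)
          (by simp only; linarith only [hwi, hvpos]) (by simp only; linarith only [hlt])
        have hdγ1 : dγ.1 ≤ (i:ℝ) := by
          have := both_le (hγ.2.2 dγ hdγ ((i:ℝ), v') hpγ')
            (by simp only; linarith only [hdγw, hlt])
          exact this.1
        obtain ⟨e, heγ, heδ, he1, he2⟩ := crossing hγ.2.1 hγ.2.2 hδ.2.1 hδ.2.2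
          (cγ := (w, 0)) (cδ := cδ) (dγ := dγ) (dδ := ((i:ℝ), v))
          hqγ hcδ hdγ hpδ (by simp only; linarith only [hcδw])
          (by simp only; linarith only [hdγw])
          (by simp only; linarith only [hdγw, hwi, hvpos])
          (by simp only; linarith only [hcδ1]) (by simp only; linarith only [hdγ1])
        obtain ⟨P, hP, haP, hbP⟩ := splice hγ hδ heγ heδ hqγ hpδ
          (by exact he1) (by simp only; linarith only [he2, hdγw])
        exact le_csSup hbdd ⟨hwI, P, hP, hbP, haP⟩
end
end

section
/- For each i ∈ {1,…,2m} and j ∈ {1,…,n}, the pointer r↑ is constant on g↑ ∩ B_ij: for any two points (u,j−1), (u',j−1) ∈ g↑ ∩ B_ij, r↑(u,j−1) = r↑(u',j−1). -/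
open Set

noncomputable section

section Aux

variable {k : ℕ}

lemma fCurve_nat (x : ℕ → EuclideanSpace ℝ (Fin k)) (a : ℕ) : fCurve x (a : ℝ) = x a := by
  simp [fCurve, Int.fract_natCast, Int.floor_natCast]

lemma fCurve_affine (x : ℕ → EuclideanSpace ℝ (Fin k)) (a : ℕ) {t : ℝ}
    (ht : t ∈ Set.Icc (a : ℝ) ((a : ℝ) + 1)) :
    fCurve x t = ((a : ℝ) + 1 - t) • x a + (t - a) • x (a + 1) := by
  rcases eq_or_lt_of_le ht.2 with h | h
  · have hcast : ((a : ℝ) + 1) = ((a + 1 : ℕ) : ℝ) := by push_cast; ring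
    rw [h, hcast, fCurve_nat]
    push_cast
    simp
  · have hfl : ⌊t⌋ = (a : ℤ) := by
      rw [Int.floor_eq_iff]
      constructor
      · exact_mod_cast ht.1
      · push_cast; exact h
    have hfr : Int.fract t = t - a := by
      rw [Int.fract, hfl]; push_cast; ring
    have h1 : (1 : ℝ) - (t - a) = (a : ℝ) + 1 - t := by ring
    rw [fCurve, hfr, hfl, h1]
    simp

end Aux

lemma fCurveExt_affine {k m : ℕ} (x : ℕ → EuclideanSpace ℝ (Fin k)) (hx : x m = x 0)
    {i : ℕ} (hi1 : 1 ≤ i) (hi2 : i ≤ 2 * m) :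
    ∃ A B : EuclideanSpace ℝ (Fin k), ∀ t ∈ Set.Icc ((i : ℝ) - 1) (i : ℝ),
      fCurveExt m x t = ((i : ℝ) - t) • A + (t - ((i : ℝ) - 1)) • B := by
  by_cases him : i ≤ m
  · refine ⟨x (i - 1), x i, fun t ht => ?_⟩
    have hc : ((i - 1 : ℕ) : ℝ) = (i : ℝ) - 1 := by
      push_cast [Nat.cast_sub hi1]; ring
    have htm : t ≤ (m : ℝ) := le_trans ht.2 (by exact_mod_cast him)
    have hidx : i - 1 + 1 = i := by omega
    have ht' : t ∈ Set.Icc ((i - 1 : ℕ) : ℝ) (((i - 1 : ℕ) : ℝ) + 1) := by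
      rw [hc]; constructor
      · exact ht.1
      · linarith [ht.2]
    rw [fCurveExt, if_pos htm, fCurve_affine x (i - 1) ht', hc, hidx]
    ring_nf
  · have him' : m + 1 ≤ i := by omega
    have hmr : (m : ℝ) + 1 ≤ (i : ℝ) := by exact_mod_cast him'
    refine ⟨x (i - m - 1), x (i - m), fun t ht => ?_⟩
    by_cases htm : t ≤ (m : ℝ)
    · have hmt : (m : ℝ) ≤ t := le_trans (by linarith) ht.1
      have htm2 : t = (m : ℝ) := le_antisymm htm hmt
      have him2 : i = m + 1 := by
        have h1 : (i : ℝ) - 1 ≤ (m : ℝ) := htm2 ▸ ht.1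
        have : (i : ℝ) ≤ (m : ℝ) + 1 := by linarith
        have : i ≤ m + 1 := by exact_mod_cast this
        omega
      have h0 : i - m - 1 = 0 := by omega
      have h1 : i - m = 1 := by omega
      rw [fCurveExt, if_pos htm, htm2, fCurve_nat, hx, h0, h1, him2]
      have e1 : ((m : ℝ) + 1 : ℝ) - (m : ℝ) = 1 := by ring
      push_cast
      rw [show ((m:ℝ) + 1 - (m:ℝ)) = (1:ℝ) by ring, show ((m:ℝ) - ((m:ℝ) + 1 - 1)) = (0:ℝ) by ring]
      simp
    · have ha : ((i - m - 1 : ℕ) : ℝ) = (i : ℝ) - m - 1 := by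
        have : ((i - m - 1 : ℕ) : ℝ) = ((i : ℕ) : ℝ) - ((m : ℕ) : ℝ) - 1 := by
          push_cast [Nat.cast_sub (by omega : m ≤ i), Nat.cast_sub (by omega : 1 ≤ i - m)]
          ring
        exact this
      have hidx : i - m - 1 + 1 = i - m := by omega
      have ht' : t - m ∈ Set.Icc ((i - m - 1 : ℕ) : ℝ) (((i - m - 1 : ℕ) : ℝ) + 1) := by
        rw [ha]; constructor
        · linarith [ht.1]
        · linarith [ht.2]
      rw [fCurveExt, if_neg htm, fCurve_affine x (i - m - 1) ht', ha, hidx]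
      have e1 : (i : ℝ) - (m:ℝ) - 1 + 1 - (t - m) = (i:ℝ) - t := by ring
      have e2 : t - (m:ℝ) - ((i:ℝ) - m - 1) = t - ((i:ℝ) - 1) := by ring
      rw [e1, e2]

lemma continuousOn_union_closed {α β : Type*} [TopologicalSpace α] [TopologicalSpace β]
    {f : α → β} {s t : Set α} (hs : IsClosed s) (ht : IsClosed t)
    (h1 : ContinuousOn f s) (h2 : ContinuousOn f t) : ContinuousOn f (s ∪ t) := by
  intro z hz
  have hws : ContinuousWithinAt f s z := by
    by_cases h : z ∈ s
    · exact h1 z h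
    · exact continuousWithinAt_of_notMem_closure (by rwa [hs.closure_eq])
  have hwt : ContinuousWithinAt f t z := by
    by_cases h : z ∈ t
    · exact h2 z h
    · exact continuousWithinAt_of_notMem_closure (by rwa [ht.closure_eq])
  exact hws.union hwt

lemma contOn_fCurve {k : ℕ} (x : ℕ → EuclideanSpace ℝ (Fin k)) (N : ℕ) :
    ContinuousOn (fCurve x) (Set.Icc (0 : ℝ) N) := by
  induction N with
  | zero =>
    simp only [Nat.cast_zero, Set.Icc_self]
    exact continuousOn_singleton _ _
  | succ N ih =>
    have hsplit : Set.Icc (0 : ℝ) ((N + 1 : ℕ) : ℝ) =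
        Set.Icc (0 : ℝ) (N : ℝ) ∪ Set.Icc (N : ℝ) ((N + 1 : ℕ) : ℝ) := by
      rw [Set.Icc_union_Icc_eq_Icc (by positivity) (by push_cast; linarith)]
    rw [hsplit]
    refine continuousOn_union_closed isClosed_Icc isClosed_Icc ih ?_
    have haff : Continuous fun t : ℝ => ((N : ℝ) + 1 - t) • x N + (t - N) • x (N + 1) := by
      continuity
    refine haff.continuousOn.congr fun t ht => ?_
    refine fCurve_affine x N ?_
    constructor
    · exact ht.1
    · have := ht.2; push_cast at this; linarith

lemma contOn_fCurveExt {k m : ℕ} (x : ℕ → EuclideanSpace ℝ (Fin k)) (hx : x m = x 0) :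
    ContinuousOn (fCurveExt m x) (Set.Icc (0 : ℝ) (2 * (m : ℝ))) := by
  have hsplit : Set.Icc (0 : ℝ) (2 * (m : ℝ)) =
      Set.Icc (0 : ℝ) (m : ℝ) ∪ Set.Icc (m : ℝ) (2 * (m : ℝ)) := by
    rw [Set.Icc_union_Icc_eq_Icc (by positivity) (by linarith [Nat.cast_nonneg (α := ℝ) m])]
  rw [hsplit]
  refine continuousOn_union_closed isClosed_Icc isClosed_Icc ?_ ?_
  · refine (contOn_fCurve x m).congr fun t ht => ?_
    rw [fCurveExt, if_pos ht.2]
  · have hcomp : ContinuousOn (fun t : ℝ => fCurve x (t - m)) (Set.Icc (m : ℝ) (2 * m)) := by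
      refine (contOn_fCurve x m).comp (by fun_prop) fun t ht => ?_
      constructor
      · linarith [ht.1]
      · linarith [ht.2]
    refine hcomp.congr fun t ht => ?_
    rcases eq_or_lt_of_le ht.1 with h | h
    · rw [fCurveExt, if_pos (le_of_eq h.symm), ← h]
      beta_reduce
      rw [show (m : ℝ) - m = ((0 : ℕ) : ℝ) by simp, fCurve_nat]
      rw [fCurve_nat]
      exact hx
    · rw [fCurveExt, if_neg (not_le.mpr h)]

lemma isClosed_Dfree {k m n : ℕ} (x y : ℕ → EuclideanSpace ℝ (Fin k)) (hx : x m = x 0)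
    (ε : ℝ) : IsClosed (Dfree m n x y ε) := by
  have hDfull : IsClosed (Dfull m n) := (isClosed_Icc.prod isClosed_Icc)
  have hF : ContinuousOn (fun p : ℝ × ℝ => dist (fCurveExt m x p.1) (fCurve y p.2))
      (Dfull m n) := by
    have c1 : ContinuousOn (fun p : ℝ × ℝ => fCurveExt m x p.1) (Dfull m n) :=
      ContinuousOn.comp (contOn_fCurveExt x hx) continuous_fst.continuousOn
        (fun p hp => hp.1)
    have c2 : ContinuousOn (fun p : ℝ × ℝ => fCurve y p.2) (Dfull m n) :=
      ContinuousOn.comp (g := fCurve y) (f := Prod.snd) (contOn_fCurve y n) continuous_snd.continuousOn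
        (fun p hp => hp.2)
    exact continuous_dist.comp_continuousOn (c1.prodMk c2)
  have := ContinuousOn.preimage_isClosed_of_isClosed hF hDfull (isClosed_Iic (a := ε))
  convert this using 1
  rfl

lemma isBounded_Dfree {k m n : ℕ} (x y : ℕ → EuclideanSpace ℝ (Fin k)) (ε : ℝ) :
    Bornology.IsBounded (Dfree m n x y ε) := by
  refine Bornology.IsBounded.subset ?_ fun p hp => hp.1
  exact (Metric.isBounded_Icc _ _).prod (Metric.isBounded_Icc _ _)

lemma seg_subset_Dfree {k m n : ℕ} {x y : ℕ → EuclideanSpace ℝ (Fin k)} (hx : x m = x 0)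
    {ε : ℝ} {i : ℕ} (hi1 : 1 ≤ i) (hi2 : i ≤ 2 * m) {u u' c : ℝ}
    (hu : u ∈ Set.Icc ((i : ℝ) - 1) (i : ℝ)) (hu' : u' ∈ Set.Icc ((i : ℝ) - 1) (i : ℝ))
    (hc : c ∈ Set.Icc (0 : ℝ) (n : ℝ)) (huu : u ≤ u')
    (hpu : (u, c) ∈ Dfree m n x y ε) (hpu' : (u', c) ∈ Dfree m n x y ε) :
    Set.Icc u u' ×ˢ ({c} : Set ℝ) ⊆ Dfree m n x y ε := by
  obtain ⟨A, B, hAB⟩ := fCurveExt_affine x hx hi1 hi2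
  rintro ⟨s, c'⟩ ⟨hs, hc'⟩
  simp only [Set.mem_singleton_iff] at hc'
  have hcc : c = c' := hc'.symm
  subst hcc
  have hsi : s ∈ Set.Icc ((i : ℝ) - 1) (i : ℝ) := ⟨le_trans hu.1 hs.1, le_trans hs.2 hu'.2⟩
  have him : (i : ℝ) ≤ 2 * m := by exact_mod_cast hi2
  have hi0 : (1 : ℝ) ≤ (i : ℝ) := by exact_mod_cast hi1
  refine ⟨⟨⟨by linarith [hsi.1], by linarith [hsi.2]⟩, hc⟩, ?_⟩
  rcases eq_or_lt_of_le huu with heq | hlt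
  · subst heq
    have : s = u := le_antisymm hs.2 hs.1
    subst this
    exact hpu.2
  · set l : ℝ := (s - u) / (u' - u) with hl
    have hul : u' - u > 0 := by linarith
    have hl0 : 0 ≤ l := div_nonneg (by linarith [hs.1]) (by linarith)
    have hl1 : l ≤ 1 := by
      rw [div_le_one hul]; linarith [hs.2]
    have hscomb : s = (1 - l) * u + l * u' := by
      have hne : u' - u ≠ 0 := hul.ne'
      have hlm : l * (u' - u) = s - u := by rw [hl]; exact div_mul_cancel₀ _ hne
      linear_combination -hlm
    have hYbound1 : dist (fCurveExt m x u) (fCurve y c) ≤ ε := hpu.2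
    have hYbound2 : dist (fCurveExt m x u') (fCurve y c) ≤ ε := hpu'.2
    have hexp : fCurveExt m x s - fCurve y c =
        (1 - l) • (fCurveExt m x u - fCurve y c) + l • (fCurveExt m x u' - fCurve y c) := by
      rw [hAB s hsi, hAB u hu, hAB u' hu', hscomb]
      module
    show dist (fCurveExt m x s) (fCurve y c) ≤ ε
    rw [dist_eq_norm, hexp]
    calc ‖(1 - l) • (fCurveExt m x u - fCurve y c) + l • (fCurveExt m x u' - fCurve y c)‖
        ≤ ‖(1 - l) • (fCurveExt m x u - fCurve y c)‖ + ‖l • (fCurveExt m x u' - fCurve y c)‖ :=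
          norm_add_le _ _
      _ = (1 - l) * ‖fCurveExt m x u - fCurve y c‖ + l * ‖fCurveExt m x u' - fCurve y c‖ := by
          rw [norm_smul, norm_smul, Real.norm_eq_abs, Real.norm_eq_abs,
            abs_of_nonneg (by linarith), abs_of_nonneg hl0]
      _ ≤ (1 - l) * ε + l * ε := by
          rw [dist_eq_norm] at hYbound1 hYbound2
          have h1 : ‖fCurveExt m x u - fCurve y c‖ ≤ ε := hYbound1
          have h2 : ‖fCurveExt m x u' - fCurve y c‖ ≤ ε := hYbound2
          nlinarith [norm_nonneg (fCurveExt m x u - fCurve y c),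
            norm_nonneg (fCurveExt m x u' - fCurve y c)]
      _ = ε := by ring

/-- The chain property of monotone paths. -/
def IsChain2 (K : Set (ℝ × ℝ)) : Prop :=
  ∀ p ∈ K, ∀ q ∈ K, (p.1 - q.1) * (p.2 - q.2) ≥ 0

lemma chain_le {K : Set (ℝ × ℝ)} (hK : IsChain2 K) {p q : ℝ × ℝ}
    (hp : p ∈ K) (hq : q ∈ K) (h : p.1 + p.2 ≤ q.1 + q.2) :
    p.1 ≤ q.1 ∧ p.2 ≤ q.2 := by
  have h0 := hK p hp q hq
  constructor <;> nlinarith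

/-- Replace a monotone path by its closure: compact, connected, chain, inside `Dε`. -/
lemma monpath_compactify {Dε γ : Set (ℝ × ℝ)} (hγ : IsMonPath Dε γ)
    (hcl : IsClosed Dε) (hbd : Bornology.IsBounded Dε) {p q : ℝ × ℝ}
    (hp : p ∈ γ) (hq : q ∈ γ) :
    ∃ K : Set (ℝ × ℝ), IsCompact K ∧ K ⊆ Dε ∧ IsConnected K ∧ IsChain2 K ∧ p ∈ K ∧ q ∈ K := by
  obtain ⟨hsub, hconn, hchain⟩ := hγ
  refine ⟨closure γ, ?_, ?_, hconn.closure, ?_, subset_closure hp, subset_closure hq⟩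
  · exact (hbd.subset hsub).isCompact_closure
  · exact closure_minimal hsub hcl
  · -- chain on the closure
    intro a ha b hb
    have hC : IsClosed {z : (ℝ × ℝ) × (ℝ × ℝ) | 0 ≤ (z.1.1 - z.2.1) * (z.1.2 - z.2.2)} := by
      apply isClosed_le
      · exact continuous_const
      · fun_prop
    have hsub2 : γ ×ˢ γ ⊆ {z : (ℝ × ℝ) × (ℝ × ℝ) | 0 ≤ (z.1.1 - z.2.1) * (z.1.2 - z.2.2)} :=
      fun z hz => hchain z.1 hz.1 z.2 hz.2
    have : closure γ ×ˢ closure γ ⊆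
        {z : (ℝ × ℝ) × (ℝ × ℝ) | 0 ≤ (z.1.1 - z.2.1) * (z.1.2 - z.2.2)} := by
      rw [← closure_prod_eq]
      exact closure_minimal hsub2 hC
    exact this (Set.mk_mem_prod ha hb)

/-- A compact connected chain admits a continuous parametrization by `q.1 + q.2`. -/
lemma chain_param {K : Set (ℝ × ℝ)} (hKc : IsCompact K) (hKconn : IsConnected K)
    (hKchain : IsChain2 K) :
    ∃ ψ : ℝ → ℝ × ℝ,
      ContinuousOn ψ ((fun q : ℝ × ℝ => q.1 + q.2) '' K) ∧
      (∀ t ∈ (fun q : ℝ × ℝ => q.1 + q.2) '' K, ψ t ∈ K ∧ (ψ t).1 + (ψ t).2 = t) ∧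
      (∀ q ∈ K, ψ (q.1 + q.2) = q) := by
  classical
  set φ : ℝ × ℝ → ℝ := fun q => q.1 + q.2 with hφ
  have hφc : Continuous φ := by fun_prop
  set J : Set ℝ := φ '' K with hJ
  have hKne : K.Nonempty := hKconn.nonempty
  have hinj : ∀ p ∈ K, ∀ q ∈ K, φ p = φ q → p = q := by
    intro p hp q hq h
    have h1 := chain_le hKchain hp hq (le_of_eq h)
    have h2 := chain_le hKchain hq hp (le_of_eq h.symm)
    exact Prod.ext (le_antisymm h1.1 h2.1) (le_antisymm h1.2 h2.2)
  haveI : CompactSpace ↥K := isCompact_iff_compactSpace.mp hKc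
  set Φ : ↥K → ↥J := fun z => ⟨φ z.1, ⟨z.1, z.2, rfl⟩⟩ with hΦ
  have hΦc : Continuous Φ := Continuous.subtype_mk (hφc.comp continuous_subtype_val) _
  have hΦbij : Function.Bijective Φ := by
    constructor
    · intro a b hab
      exact Subtype.ext (hinj a.1 a.2 b.1 b.2 (congrArg Subtype.val hab))
    · rintro ⟨t, q, hqK, rfl⟩
      exact ⟨⟨q, hqK⟩, rfl⟩
  set e : ↥K ≃ ↥J := Equiv.ofBijective Φ hΦbij with he
  have hec : Continuous e := hΦc
  set h : ↥K ≃ₜ ↥J := Continuous.homeoOfEquivCompactToT2 (f := e) hec with hh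
  set ψ : ℝ → ℝ × ℝ := fun t => if ht : t ∈ J then (h.symm ⟨t, ht⟩ : ℝ × ℝ) else hKne.some
    with hψ
  have hval : ∀ (z : ↥K), ((h z : ↥J) : ℝ) = φ z.1 := fun z => rfl
  have hmem : ∀ t (ht : t ∈ J), ψ t ∈ K ∧ (ψ t).1 + (ψ t).2 = t := by
    intro t ht
    have h1 : ψ t = (h.symm ⟨t, ht⟩ : ℝ × ℝ) := by rw [hψ]; simp [ht]
    constructor
    · rw [h1]; exact (h.symm ⟨t, ht⟩).2
    · have := hval (h.symm ⟨t, ht⟩)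
      rw [h.apply_symm_apply] at this
      rw [h1]
      exact this.symm
  refine ⟨ψ, ?_, fun t ht => hmem t ht, ?_⟩
  · rw [continuousOn_iff_continuous_restrict]
    have : Set.domRestrict J ψ = fun t : ↥J => ((h.symm t : ↥K) : ℝ × ℝ) := by
      funext t
      simp only [Set.domRestrict_apply, hψ, dif_pos t.2]
    rw [this]
    exact continuous_subtype_val.comp h.symm.continuous
  · intro q hq
    have htJ : φ q ∈ J := ⟨q, hq, rfl⟩
    have h1 : ψ (φ q) = (h.symm ⟨φ q, htJ⟩ : ℝ × ℝ) := by rw [hψ]; simp [htJ]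
    have h2 : h ⟨q, hq⟩ = ⟨φ q, htJ⟩ := Subtype.ext rfl
    rw [h1, ← h2, h.symm_apply_apply]

lemma isConnected_upper_piece {K : Set (ℝ × ℝ)} {ψ : ℝ → ℝ × ℝ}
    (hKconn : IsConnected K) (hKchain : IsChain2 K)
    (hψc : ContinuousOn ψ ((fun q : ℝ × ℝ => q.1 + q.2) '' K))
    (hmem : ∀ t ∈ (fun q : ℝ × ℝ => q.1 + q.2) '' K, ψ t ∈ K ∧ (ψ t).1 + (ψ t).2 = t)
    (hinv : ∀ q ∈ K, ψ (q.1 + q.2) = q)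
    {z : ℝ × ℝ} (hzK : z ∈ K) :
    IsConnected {q ∈ K | z.1 ≤ q.1 ∧ z.2 ≤ q.2} := by
  set φ : ℝ × ℝ → ℝ := fun q => q.1 + q.2 with hφ
  have hφc : Continuous φ := by fun_prop
  set J : Set ℝ := φ '' K with hJ
  have hJconn : IsPreconnected J := (hKconn.image φ hφc.continuousOn).isPreconnected
  have heq : {q ∈ K | z.1 ≤ q.1 ∧ z.2 ≤ q.2} = ψ '' (J ∩ Set.Ici (z.1 + z.2)) := by
    ext q
    constructor
    · rintro ⟨hqK, h1, h2⟩
      exact ⟨φ q, ⟨⟨q, hqK, rfl⟩, add_le_add h1 h2⟩, hinv q hqK⟩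
    · rintro ⟨t, ⟨htJ, hts⟩, rfl⟩
      obtain ⟨hK', hsum⟩ := hmem t htJ
      refine ⟨hK', ?_⟩
      exact chain_le hKchain hzK hK' (by rw [hsum]; exact hts)
  rw [heq]
  refine IsConnected.image ?_ ψ (hψc.mono Set.inter_subset_left)
  refine ⟨⟨z.1 + z.2, ⟨z, hzK, rfl⟩, Set.mem_Ici.mpr le_rfl⟩, ?_⟩
  exact (hJconn.ordConnected.inter Set.ordConnected_Ici).isPreconnected

lemma isConnected_lower_piece {K : Set (ℝ × ℝ)} {ψ : ℝ → ℝ × ℝ}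
    (hKconn : IsConnected K) (hKchain : IsChain2 K)
    (hψc : ContinuousOn ψ ((fun q : ℝ × ℝ => q.1 + q.2) '' K))
    (hmem : ∀ t ∈ (fun q : ℝ × ℝ => q.1 + q.2) '' K, ψ t ∈ K ∧ (ψ t).1 + (ψ t).2 = t)
    (hinv : ∀ q ∈ K, ψ (q.1 + q.2) = q)
    {z : ℝ × ℝ} (hzK : z ∈ K) :
    IsConnected {q ∈ K | q.1 ≤ z.1 ∧ q.2 ≤ z.2} := by
  set φ : ℝ × ℝ → ℝ := fun q => q.1 + q.2 with hφ
  have hφc : Continuous φ := by fun_prop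
  set J : Set ℝ := φ '' K with hJ
  have hJconn : IsPreconnected J := (hKconn.image φ hφc.continuousOn).isPreconnected
  have heq : {q ∈ K | q.1 ≤ z.1 ∧ q.2 ≤ z.2} = ψ '' (J ∩ Set.Iic (z.1 + z.2)) := by
    ext q
    constructor
    · rintro ⟨hqK, h1, h2⟩
      exact ⟨φ q, ⟨⟨q, hqK, rfl⟩, add_le_add h1 h2⟩, hinv q hqK⟩
    · rintro ⟨t, ⟨htJ, hts⟩, rfl⟩
      obtain ⟨hK', hsum⟩ := hmem t htJ
      refine ⟨hK', ?_⟩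
      exact chain_le hKchain hK' hzK (by rw [hsum]; exact hts)
  rw [heq]
  refine IsConnected.image ?_ ψ (hψc.mono Set.inter_subset_left)
  refine ⟨⟨z.1 + z.2, ⟨z, hzK, rfl⟩, Set.mem_Iic.mpr le_rfl⟩, ?_⟩
  exact (hJconn.ordConnected.inter Set.ordConnected_Iic).isPreconnected

/-- Moving the start point left along a free horizontal segment preserves upward reachability. -/
lemma reach_left {Dε : Set (ℝ × ℝ)} (hcl : IsClosed Dε) (hbd : Bornology.IsBounded Dε)
    {u u' c nn a : ℝ} (huu : u ≤ u')
    (hseg : Set.Icc u u' ×ˢ ({c} : Set ℝ) ⊆ Dε) (hcn : c < nn)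
    (hra : Reach Dε (u', c) (a, nn)) : Reach Dε (u, c) (a, nn) := by
  obtain ⟨γ, hγ, hp'γ, haγ⟩ := hra
  obtain ⟨K, hKc, hKD, hKconn, hKchain, hp'K, haK⟩ := monpath_compactify hγ hcl hbd hp'γ haγ
  obtain ⟨ψ, hψc, hψmem, hψinv⟩ := chain_param hKc hKconn hKchain
  set P : Set (ℝ × ℝ) := {q ∈ K | u' ≤ q.1 ∧ c ≤ q.2} with hP
  have hPconn : IsConnected P :=
    isConnected_upper_piece hKconn hKchain hψc hψmem hψinv (z := (u', c)) hp'K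
  have hp'P : (u', c) ∈ P := ⟨hp'K, le_refl _, le_refl _⟩
  have hu'a : u' ≤ a := by
    have h0 := hKchain (u', c) hp'K (a, nn) haK
    simp only at h0
    nlinarith
  have haP : (a, nn) ∈ P := ⟨haK, hu'a, le_of_lt hcn⟩
  have hsegconn : IsConnected (Set.Icc u u' ×ˢ ({c} : Set ℝ)) := by
    refine IsConnected.prod ⟨⟨u, le_refl _, huu⟩, isPreconnected_Icc⟩ isConnected_singleton
  refine ⟨Set.Icc u u' ×ˢ ({c} : Set ℝ) ∪ P, ⟨?_, ?_, ?_⟩, ?_, ?_⟩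
  · exact Set.union_subset hseg fun q hq => hKD hq.1
  · refine IsConnected.union ⟨(u', c), ?_, hp'P⟩ hsegconn hPconn
    exact ⟨⟨huu, le_refl _⟩, rfl⟩
  · rintro p (hp | hp) q (hq | hq)
    · have hp2 : p.2 = c := hp.2
      have hq2 : q.2 = c := hq.2
      rw [hp2, hq2]
      simp
    · have hp2 : p.2 = c := hp.2
      have hp1 : p.1 ≤ u' := hp.1.2
      have h1 : p.1 - q.1 ≤ 0 := by linarith [hq.2.1]
      have h2 : p.2 - q.2 ≤ 0 := by rw [hp2]; linarith [hq.2.2]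
      nlinarith
    · have hq2 : q.2 = c := hq.2
      have h1 : 0 ≤ p.1 - q.1 := by linarith [hp.2.1, hq.1.2]
      have h2 : 0 ≤ p.2 - q.2 := by rw [hq2]; linarith [hp.2.2]
      positivity
    · exact hKchain p hp.1 q hq.1
  · exact Or.inl ⟨⟨le_refl _, huu⟩, rfl⟩
  · exact Or.inr haP

/-- The crossing argument: if the left point reaches `(a, nn)` and the right point reaches
some `(w, nn)` with `w ≤ a`, then the right point also reaches `(a, nn)`. -/
lemma reach_cross {Dε : Set (ℝ × ℝ)} (hcl : IsClosed Dε) (hbd : Bornology.IsBounded Dε)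
    {u u' c nn a w : ℝ} (huu : u ≤ u') (hcn : c < nn) (hwa : w ≤ a)
    (h1 : Reach Dε (u, c) (a, nn)) (h2 : Reach Dε (u', c) (w, nn)) :
    Reach Dε (u', c) (a, nn) := by
  obtain ⟨γ1, hγ1, hpγ1, haγ1⟩ := h1
  obtain ⟨γ2, hγ2, hp'γ2, hwγ2⟩ := h2
  obtain ⟨K, hKc, hKD, hKconn, hKchain, hpK, haK⟩ := monpath_compactify hγ1 hcl hbd hpγ1 haγ1
  obtain ⟨K', hK'c, hK'D, hK'conn, hK'chain, hp'K', hwK'⟩ :=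
    monpath_compactify hγ2 hcl hbd hp'γ2 hwγ2
  obtain ⟨ψ, hψc, hψmem, hψinv⟩ := chain_param hKc hKconn hKchain
  obtain ⟨ψ', hψ'c, hψ'mem, hψ'inv⟩ := chain_param hK'c hK'conn hK'chain
  set φ : ℝ × ℝ → ℝ := fun q => q.1 + q.2 with hφ
  set J : Set ℝ := φ '' K with hJdef
  set J' : Set ℝ := φ '' K' with hJ'def
  have hJoc : J.OrdConnected := by
    have : IsPreconnected J := (hKconn.image φ (by fun_prop : Continuous φ).continuousOn).isPreconnected
    exact this.ordConnected
  have hJ'oc : J'.OrdConnected := by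
    have : IsPreconnected J' := (hK'conn.image φ (by fun_prop : Continuous φ).continuousOn).isPreconnected
    exact this.ordConnected
  have hu'w : u' ≤ w := by
    have h0 := hK'chain (u', c) hp'K' (w, nn) hwK'
    simp only at h0
    nlinarith
  set t0 : ℝ := u' + c with ht0
  set t1 : ℝ := w + nn with ht1
  have ht01 : t0 ≤ t1 := by simp only [ht0, ht1]; linarith
  have hsubJ : Set.Icc t0 t1 ⊆ J := by
    have hbig : Set.Icc (u + c) (a + nn) ⊆ J :=
      hJoc.out ⟨(u, c), hpK, rfl⟩ ⟨(a, nn), haK, rfl⟩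
    refine Set.Subset.trans (Set.Icc_subset_Icc (by linarith) (by linarith)) hbig
  have hsubJ' : Set.Icc t0 t1 ⊆ J' :=
    hJ'oc.out ⟨(u', c), hp'K', rfl⟩ ⟨(w, nn), hwK', rfl⟩
  set g : ℝ → ℝ := fun t => (ψ t).1 - (ψ' t).1 with hg
  have hgc : ContinuousOn g (Set.Icc t0 t1) := by
    refine ContinuousOn.sub ?_ ?_
    · exact (continuous_fst.comp_continuousOn (hψc.mono hsubJ))
    · exact (continuous_fst.comp_continuousOn (hψ'c.mono hsubJ'))
  have hψ't0 : ψ' t0 = (u', c) := by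
    have := hψ'inv (u', c) hp'K'
    simpa using this
  have hψ't1 : ψ' t1 = (w, nn) := by
    have := hψ'inv (w, nn) hwK'
    simpa using this
  have hgt0 : g t0 ≤ 0 := by
    have hmem0 := hψmem t0 (hsubJ ⟨le_refl _, ht01⟩)
    have hch := chain_le hKchain hpK hmem0.1 (by rw [hmem0.2]; simp only [ht0]; linarith)
    have : (ψ t0).1 ≤ u' := by
      have h2 := hch.2
      have hsum := hmem0.2
      simp only at h2 hsum ⊢
      linarith [h2, hsum]
    simp only [hg, hψ't0]
    linarith
  have hgt1 : 0 ≤ g t1 := by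
    have hmem1 := hψmem t1 (hsubJ ⟨ht01, le_refl _⟩)
    have hch := chain_le hKchain hmem1.1 haK (by rw [hmem1.2]; simp only [ht1]; linarith)
    have : w ≤ (ψ t1).1 := by
      have h2 := hch.2
      have hsum := hmem1.2
      linarith [h2, hsum]
    simp only [hg, hψ't1]
    linarith
  have hivt : ∃ ts ∈ Set.Icc t0 t1, g ts = 0 := by
    have h0mem : (0 : ℝ) ∈ Set.Icc (g t0) (g t1) := ⟨hgt0, hgt1⟩
    have := intermediate_value_Icc ht01 hgc h0mem
    obtain ⟨ts, hts, hgts⟩ := this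
    exact ⟨ts, hts, hgts⟩
  obtain ⟨ts, hts, hgts⟩ := hivt
  set z : ℝ × ℝ := ψ ts with hz
  have hmz := hψmem ts (hsubJ hts)
  have hmz' := hψ'mem ts (hsubJ' hts)
  have hzz' : ψ' ts = z := by
    have h1' : (ψ' ts).1 = z.1 := by
      simp only [hg] at hgts
      simp only [hz]
      linarith
    have h2' : (ψ' ts).2 = z.2 := by
      have e1 := hmz.2
      have e2 := hmz'.2
      simp only [hz]
      linarith
    exact Prod.ext h1' h2'
  have hzK : z ∈ K := hmz.1
  have hzK' : z ∈ K' := by rw [← hzz']; exact hmz'.1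
  set P1 : Set (ℝ × ℝ) := {q ∈ K' | q.1 ≤ z.1 ∧ q.2 ≤ z.2} with hP1
  set P2 : Set (ℝ × ℝ) := {q ∈ K | z.1 ≤ q.1 ∧ z.2 ≤ q.2} with hP2
  have hP1conn : IsConnected P1 :=
    isConnected_lower_piece hK'conn hK'chain hψ'c hψ'mem hψ'inv hzK'
  have hP2conn : IsConnected P2 :=
    isConnected_upper_piece hKconn hKchain hψc hψmem hψinv hzK
  have hzP1 : z ∈ P1 := ⟨hzK', le_refl _, le_refl _⟩
  have hzP2 : z ∈ P2 := ⟨hzK, le_refl _, le_refl _⟩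
  have hzsum : z.1 + z.2 = ts := hmz.2
  have hp'P1 : (u', c) ∈ P1 := by
    refine ⟨hp'K', ?_⟩
    refine chain_le hK'chain hp'K' hzK' ?_
    show u' + c ≤ z.1 + z.2
    rw [hzsum]
    exact hts.1
  have haP2 : (a, nn) ∈ P2 := by
    refine ⟨haK, ?_⟩
    refine chain_le hKchain hzK haK ?_
    show z.1 + z.2 ≤ a + nn
    rw [hzsum]
    have := hts.2
    simp only [ht1] at this
    linarith
  refine ⟨P1 ∪ P2, ⟨?_, ?_, ?_⟩, Or.inl hp'P1, Or.inr haP2⟩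
  · exact Set.union_subset (fun q hq => hK'D hq.1) (fun q hq => hKD hq.1)
  · exact IsConnected.union ⟨z, hzP1, hzP2⟩ hP1conn hP2conn
  · rintro p (hp | hp) q (hq | hq)
    · exact hK'chain p hp.1 q hq.1
    · have h1' : p.1 - q.1 ≤ 0 := by linarith [hp.2.1, hq.2.1]
      have h2' : p.2 - q.2 ≤ 0 := by linarith [hp.2.2, hq.2.2]
      nlinarith
    · have h1' : 0 ≤ p.1 - q.1 := by linarith [hp.2.1, hq.2.1]
      have h2' : 0 ≤ p.2 - q.2 := by linarith [hp.2.2, hq.2.2]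
      positivity
    · exact hKchain p hp.1 q hq.1

theorem stmt14
    (k m n : ℕ) (hk : 1 ≤ k) (hm : 1 ≤ m) (hn : 1 ≤ n)
    (x y : ℕ → EuclideanSpace ℝ (Fin k)) (hx : x m = x 0) (hy : y n = y 0)
    (ε : ℝ) (hε : 0 ≤ ε)
    (Dε : Set (ℝ × ℝ)) (hDε : Dε = Dfree m n x y ε)
    (i j : ℕ) (hi1 : 1 ≤ i) (hi2 : i ≤ 2*m) (hj1 : 1 ≤ j) (hj2 : j ≤ n) :
    ∀ u u' : ℝ, (u, (j:ℝ)-1) ∈ gUp m n Dε ∩ cellB i j →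
      (u', (j:ℝ)-1) ∈ gUp m n Dε ∩ cellB i j →
      rUp m n Dε (u, (j:ℝ)-1) = rUp m n Dε (u', (j:ℝ)-1) := by
  have hcl : IsClosed Dε := hDε ▸ isClosed_Dfree x y hx ε
  have hbd : Bornology.IsBounded Dε := hDε ▸ isBounded_Dfree x y ε
  have hjn : (j : ℝ) ≤ (n : ℝ) := by exact_mod_cast hj2
  have hj1' : (1 : ℝ) ≤ (j : ℝ) := by exact_mod_cast hj1
  have hcn : ((j : ℝ) - 1) < (n : ℝ) := by linarith
  have hcIcc : ((j : ℝ) - 1) ∈ Icc (0 : ℝ) (n : ℝ) := ⟨by linarith, by linarith⟩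
  have main : ∀ u u' : ℝ, u ≤ u' →
      (u, (j:ℝ)-1) ∈ gUp m n Dε ∩ cellB i j →
      (u', (j:ℝ)-1) ∈ gUp m n Dε ∩ cellB i j →
      rUp m n Dε (u, (j:ℝ)-1) = rUp m n Dε (u', (j:ℝ)-1) := by
    intro u u' huu hu hu'
    obtain ⟨⟨hpD, q, hqT, hreach⟩, hpB⟩ := hu
    obtain ⟨⟨hp'D, q', hq'T, hreach'⟩, hp'B⟩ := hu'
    have hq2 : q.2 = (n : ℝ) := hqT.2
    have hq1 : q.1 ∈ Icc (0 : ℝ) (2 * (m : ℝ)) := hqT.1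
    have hqpair : q = (q.1, (n : ℝ)) := Prod.ext rfl hq2
    rw [hqpair] at hreach
    have hq'2 : q'.2 = (n : ℝ) := hq'T.2
    have hq'1 : q'.1 ∈ Icc (0 : ℝ) (2 * (m : ℝ)) := hq'T.1
    have hq'pair : q' = (q'.1, (n : ℝ)) := Prod.ext rfl hq'2
    rw [hq'pair] at hreach'
    set c : ℝ := (j : ℝ) - 1 with hc
    set S : ℝ × ℝ → Set ℝ :=
      fun p => {a : ℝ | a ∈ Icc (0 : ℝ) (2 * (m : ℝ)) ∧ Reach Dε p (a, (n : ℝ))} with hS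
    have hrUp : ∀ p : ℝ × ℝ, rUp m n Dε p = sSup (S p) := fun p => rfl
    have hSbdd : ∀ p : ℝ × ℝ, BddAbove (S p) :=
      fun p => ⟨2 * (m : ℝ), fun a ha => ha.1.2⟩
    have huB : u ∈ Icc ((i : ℝ) - 1) (i : ℝ) := hpB.1
    have hu'B : u' ∈ Icc ((i : ℝ) - 1) (i : ℝ) := hp'B.1
    have hpDf : (u, c) ∈ Dfree m n x y ε := by rw [← hDε]; exact hpD
    have hp'Df : (u', c) ∈ Dfree m n x y ε := by rw [← hDε]; exact hp'D
    have hseg : Icc u u' ×ˢ ({c} : Set ℝ) ⊆ Dε := by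
      rw [hDε]
      exact seg_subset_Dfree hx hi1 hi2 huB hu'B hcIcc huu hpDf hp'Df
    have hSne : (S (u, c)).Nonempty := ⟨q.1, hq1, hreach⟩
    have hS'ne : (S (u', c)).Nonempty := ⟨q'.1, hq'1, hreach'⟩
    rw [hrUp, hrUp]
    apply le_antisymm
    · refine csSup_le hSne fun a ha => ?_
      rcases le_total a q'.1 with h | h
      · exact le_trans h (le_csSup (hSbdd _) ⟨hq'1, hreach'⟩)
      · exact le_csSup (hSbdd _) ⟨ha.1, reach_cross hcl hbd huu hcn h ha.2 hreach'⟩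
    · refine csSup_le hS'ne fun a ha => ?_
      exact le_csSup (hSbdd _) ⟨ha.1, reach_left hcl hbd huu hseg hcn ha.2⟩
  intro u u' hu hu'
  rcases le_total u u' with h | h
  · exact main u u' h hu hu'
  · exact (main u' u h hu' hu).symm
end
end
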